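/- arXiv:1607.07080 — 7 statements merged into one kernel-verified Lean document; each statement's English description precedes it below -/
import Mathlib

section
/- Let A⁻ ≤ A⁺ be two d×d Metzler matrices (all off-diagonal entries nonnegative). Then every matrix M with A⁻ ≤ M ≤ A⁺ (entrywise) is Hurwitz stable (all eigenvalues have negative real part) if and only if A⁺ is Hurwitz stable. -/
open Matrix

variable {d : ℕ}

/-- A real square matrix is Metzler if all its off-diagonal entries are nonnegative. -/
def Metzler (M : Matrix (Fin d) (Fin d) ℝ) : Prop :=
  ∀ i j, i ≠ j → 0 ≤ M i j

/-- A real square matrix is Hurwitz stable if all its (complex) eigenvalues,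
i.e. all roots of its characteristic polynomial, have strictly negative real part. -/
def IsHurwitz (M : Matrix (Fin d) (Fin d) ℝ) : Prop :=
  ∀ z : ℂ, (M.map (Complex.ofReal)).charpoly.IsRoot z → z.re < 0

/-- The directed graph associated with a matrix: edge from `m` to `n` iff `m ≠ n`
and the `(n, m)` entry of `M` is nonzero. -/
def edgeRel (M : Matrix (Fin d) (Fin d) ℝ) (m n : Fin d) : Prop :=
  m ≠ n ∧ M n m ≠ 0

section Aux

open Polynomial Filter
open scoped ENNReal NNReal

lemma eval_charpoly' {K : Type*} [Field K] (M : Matrix (Fin d) (Fin d) K) (z : K) :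
    M.charpoly.eval z = (z • (1 : Matrix (Fin d) (Fin d) K) - M).det := by
  rw [Matrix.charpoly, ← Polynomial.coe_evalRingHom, RingHom.map_det]
  congr 1
  ext i j
  by_cases h : i = j <;>
    simp [Matrix.charmatrix_apply, h, Matrix.one_apply, Matrix.smul_apply, Matrix.sub_apply,
      Matrix.diagonal_apply]

attribute [local instance] Matrix.linftyOpNormedAddCommGroup Matrix.linftyOpNormedRing
  Matrix.linftyOpNormedAlgebra Matrix.linftyOpNormedSpace

lemma row_sum_le_norm (M : Matrix (Fin d) (Fin d) ℂ) (i : Fin d) : ∑ j, ‖M i j‖ ≤ ‖M‖ := by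
  rw [Matrix.linfty_opNorm_def]
  have h : (∑ j, ‖M i j‖₊ : ℝ≥0) ≤ Finset.univ.sup fun i => ∑ j, ‖M i j‖₊ :=
    Finset.le_sup (f := fun i => ∑ j, ‖M i j‖₊) (Finset.mem_univ i)
  calc ∑ j, ‖M i j‖ = ((∑ j, ‖M i j‖₊ : ℝ≥0) : ℝ) := by push_cast; rfl
  _ ≤ _ := by exact_mod_cast h

lemma exists_pos_vec {A : Matrix (Fin d) (Fin d) ℝ} (hA : Metzler A) (hH : IsHurwitz A) :
    ∃ x : Fin d → ℝ, (∀ i, 0 < x i) ∧ ∀ i, A.mulVec x i < 0 := by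
  rcases isEmpty_or_nonempty (Fin d) with hd | hd
  · exact ⟨fun _ => 1, fun i => isEmptyElim i, fun i => isEmptyElim i⟩
  set A' := A.map Complex.ofReal with hA'
  -- choose the shift c
  have hcex : ∃ c : ℝ, 0 < c ∧ (∀ i, 0 ≤ A i i + c) ∧
      ∀ w ∈ A'.charpoly.roots.toFinset, ‖w + c‖ < c := by
    have h1 : ∀ᶠ c : ℝ in atTop, 0 < c := eventually_gt_atTop 0
    have h2 : ∀ᶠ c : ℝ in atTop, ∀ i, 0 ≤ A i i + c := by
      rw [eventually_all]
      intro i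
      filter_upwards [eventually_ge_atTop (-(A i i))] with c hc
      linarith
    have h3 : ∀ᶠ c : ℝ in atTop, ∀ w ∈ A'.charpoly.roots.toFinset,
        ‖w + c‖ < c := by
      rw [eventually_all_finset]
      intro w hw
      have hre : w.re < 0 := by
        apply hH
        rw [Multiset.mem_toFinset, Polynomial.mem_roots'] at hw
        exact hw.2
      filter_upwards [eventually_gt_atTop 0,
        eventually_gt_atTop (Complex.normSq w / (-(2 * w.re)))] with c hc1 hc2
      have h5 : Complex.normSq w < c * (-(2 * w.re)) :=
        (div_lt_iff₀ (by linarith)).mp hc2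
      have hnsq : Complex.normSq w = w.re ^ 2 + w.im ^ 2 := by
        rw [Complex.normSq_apply]; ring
      have h4 : ‖w + c‖ ^ 2 < c ^ 2 := by
        rw [Complex.sq_norm, Complex.normSq_apply]
        simp only [Complex.add_re, Complex.add_im, Complex.ofReal_re, Complex.ofReal_im]
        nlinarith
      exact lt_of_pow_lt_pow_left₀ 2 hc1.le h4
    exact (h1.and (h2.and h3)).exists
  obtain ⟨c, hc0, hcd, hcroots⟩ := hcex
  set B := A + c • (1 : Matrix (Fin d) (Fin d) ℝ) with hBdef
  have hB0 : ∀ i j, 0 ≤ B i j := by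
    intro i j
    by_cases h : i = j
    · subst h
      simpa [hBdef, Matrix.add_apply, Matrix.smul_apply, Matrix.one_apply] using hcd i
    · simpa [hBdef, Matrix.add_apply, Matrix.smul_apply, Matrix.one_apply, h] using hA i j h
  have hBpow : ∀ n, ∀ i j, 0 ≤ (B ^ n) i j := by
    intro n
    induction n with
    | zero => intro i j; by_cases h : i = j <;> simp [Matrix.one_apply, h]
    | succ n ih =>
      intro i j
      rw [pow_succ, Matrix.mul_apply]
      exact Finset.sum_nonneg fun k _ => mul_nonneg (ih i k) (hB0 k j)
  set B' := B.map Complex.ofReal with hB'def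
  have hB'eq : B' = A' + (c : ℂ) • (1 : Matrix (Fin d) (Fin d) ℂ) := by
    ext i j
    by_cases h : i = j <;>
      simp [hB'def, hBdef, hA', Matrix.map_apply, Matrix.add_apply, Matrix.smul_apply,
        Matrix.one_apply, h]
  have hmap : ∀ n : ℕ, B' ^ n = (B ^ n).map Complex.ofReal := by
    intro n
    have h1 : B' = Complex.ofRealHom.mapMatrix B := rfl
    rw [h1, ← map_pow, RingHom.mapMatrix_apply]
    rfl
  -- spectral radius bound
  have hspec : ∀ z ∈ spectrum ℂ B', ‖z‖₊ < c.toNNReal := by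
    intro z hz
    rw [spectrum.mem_iff] at hz
    have hdet : (z • (1 : Matrix (Fin d) (Fin d) ℂ) - B').det = 0 := by
      by_contra h
      apply hz
      rw [Algebra.algebraMap_eq_smul_one]
      exact (Matrix.isUnit_iff_isUnit_det _).mpr (isUnit_iff_ne_zero.mpr h)
    have hw : A'.charpoly.IsRoot (z - (c : ℂ)) := by
      rw [Polynomial.IsRoot, eval_charpoly', ← hdet]
      congr 1
      rw [hB'eq]
      ext i j
      by_cases h : i = j <;>
        simp [Matrix.sub_apply, Matrix.add_apply, Matrix.smul_apply, Matrix.one_apply, h]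
      ring
    have hmem : (z - (c : ℂ)) ∈ A'.charpoly.roots.toFinset := by
      rw [Multiset.mem_toFinset, Polynomial.mem_roots']
      exact ⟨(Matrix.charpoly_monic A').ne_zero, hw⟩
    have habs := hcroots _ hmem
    rw [sub_add_cancel] at habs
    rw [← NNReal.coe_lt_coe]
    rwa [coe_nnnorm, Real.coe_toNNReal _ hc0.le]
  have hrad : spectralRadius ℂ B' < (c.toNNReal : ℝ≥0∞) :=
    spectrum.spectralRadius_lt_of_forall_lt B' hspec
  obtain ⟨r, hr1, hr2⟩ := ENNReal.lt_iff_exists_nnreal_btwn.mp hrad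
  have hr2' : (r : ℝ) < c := by
    rw [ENNReal.coe_lt_coe] at hr2
    calc (r : ℝ) < (c.toNNReal : ℝ) := NNReal.coe_lt_coe.mpr hr2
    _ = c := Real.coe_toNNReal _ hc0.le
  -- eventual geometric bound on norms
  have hev : ∀ᶠ n : ℕ in atTop, ‖B' ^ n‖ ≤ (r : ℝ) ^ n := by
    have hgel := spectrum.pow_nnnorm_pow_one_div_tendsto_nhds_spectralRadius B'
    have h2 := hgel.eventually_lt_const hr1
    filter_upwards [h2, eventually_ge_atTop 1] with n hn hn1
    have hn0 : (n : ℝ) ≠ 0 := Nat.cast_ne_zero.mpr (by omega)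
    have h3 : ((‖B' ^ n‖₊ : ℝ≥0∞) ^ ((1 : ℝ) / n)) ^ (n : ℝ) < (r : ℝ≥0∞) ^ (n : ℝ) :=
      ENNReal.rpow_lt_rpow hn (by positivity)
    rw [← ENNReal.rpow_mul, one_div, inv_mul_cancel₀ hn0, ENNReal.rpow_one,
      ENNReal.rpow_natCast, ← ENNReal.coe_pow, ENNReal.coe_lt_coe] at h3
    calc ‖B' ^ n‖ = ((‖B' ^ n‖₊ : ℝ≥0) : ℝ) := rfl
    _ ≤ ((r ^ n : ℝ≥0) : ℝ) := NNReal.coe_le_coe.mpr h3.le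
    _ = (r : ℝ) ^ n := by push_cast; ring
  obtain ⟨N, hN⟩ := eventually_atTop.mp hev
  -- the series
  set u : ℕ → Fin d → ℝ := fun n i => (∑ j, (B ^ n) i j) / c ^ (n + 1) with hu
  have hu0 : ∀ n i, 0 ≤ u n i := fun n i =>
    div_nonneg (Finset.sum_nonneg fun j _ => hBpow n i j) (by positivity)
  have hu00 : ∀ i, u 0 i = 1 / c := by
    intro i
    simp [hu, Matrix.one_apply]
  have hub : ∀ n, n ≥ N → ∀ i, u n i ≤ (1 / c) * ((r : ℝ) / c) ^ n := by
    intro n hn i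
    have h1 : ∑ j, (B ^ n) i j ≤ ‖B' ^ n‖ := by
      calc ∑ j, (B ^ n) i j = ∑ j, ‖(B' ^ n) i j‖ := by
            refine Finset.sum_congr rfl fun j _ => ?_
            rw [hmap n, Matrix.map_apply, Complex.norm_real, Real.norm_eq_abs,
              abs_of_nonneg (hBpow n i j)]
      _ ≤ ‖B' ^ n‖ := row_sum_le_norm _ i
    have h2 : ∑ j, (B ^ n) i j ≤ (r : ℝ) ^ n := h1.trans (hN n hn)
    rw [hu]
    calc (∑ j, (B ^ n) i j) / c ^ (n + 1) ≤ (r : ℝ) ^ n / c ^ (n + 1) := by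
          exact (div_le_div_iff_of_pos_right (by positivity)).mpr h2
    _ = (1 / c) * ((r : ℝ) / c) ^ n := by
          rw [div_pow, pow_succ]
          rw [div_mul_eq_div_div_swap]
          ring
  have hsumm : ∀ i, Summable fun n => u n i := by
    intro i
    rw [← summable_nat_add_iff N]
    apply Summable.of_nonneg_of_le (fun n => hu0 _ _) (fun n => hub (n + N) (Nat.le_add_left N n) i)
    apply Summable.mul_left
    simp_rw [pow_add]
    apply Summable.mul_right
    exact summable_geometric_of_lt_one (by positivity)
      (by rw [div_lt_one hc0]; exact hr2')
  set x : Fin d → ℝ := fun i => ∑' n, u n i with hx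
  have hxpos : ∀ i, 0 < x i := by
    intro i
    have h1 : u 0 i ≤ x i := Summable.le_tsum (hsumm i) 0 fun m _ => hu0 m i
    have h2 : 0 < u 0 i := by rw [hu00]; positivity
    linarith
  -- the recurrence B *ᵥ u n = c • u (n+1)
  have hBu : ∀ n i, B.mulVec (u n) i = c * u (n + 1) i := by
    intro n i
    have h1 : B.mulVec (u n) i = (∑ k, B i k * ∑ j, (B ^ n) k j) / c ^ (n + 1) := by
      rw [Matrix.mulVec, dotProduct, Finset.sum_div]
      exact Finset.sum_congr rfl fun k _ => by rw [hu]; ring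
    have h2 : ∑ k, B i k * ∑ j, (B ^ n) k j = ∑ j, (B ^ (n + 1)) i j := by
      simp_rw [Finset.mul_sum]
      rw [Finset.sum_comm]
      refine Finset.sum_congr rfl fun j _ => ?_
      rw [pow_succ', Matrix.mul_apply]
    rw [h1, h2, hu]
    have hcne : c ≠ 0 := hc0.ne'
    field_simp [pow_succ]
    ring
  have hxmul : ∀ i, B.mulVec x i = c * ∑' n, u (n + 1) i := by
    intro i
    have h1 : B.mulVec x i = ∑ k, B i k * ∑' n, u n k := by
      rw [Matrix.mulVec, dotProduct]
    calc B.mulVec x i = ∑ k, ∑' n, B i k * u n k := by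
          rw [h1]
          exact Finset.sum_congr rfl fun k _ => (tsum_mul_left).symm
    _ = ∑' n, ∑ k, B i k * u n k :=
          (Summable.tsum_finsetSum fun k _ => (hsumm k).mul_left _).symm
    _ = ∑' n, c * u (n + 1) i := by
          refine tsum_congr fun n => ?_
          have := hBu n i
          rw [Matrix.mulVec, dotProduct] at this
          exact this
    _ = c * ∑' n, u (n + 1) i := tsum_mul_left
  have hAx : ∀ i, A.mulVec x i = -1 := by
    intro i
    have hAeq : A = B - c • (1 : Matrix (Fin d) (Fin d) ℝ) := by
      rw [hBdef, add_sub_cancel_right]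
    have h1 : A.mulVec x i = B.mulVec x i - c * x i := by
      rw [hAeq, Matrix.sub_mulVec, Matrix.smul_mulVec, Matrix.one_mulVec]
      simp [Pi.sub_apply, Pi.smul_apply, smul_eq_mul]
    have h2 : x i = u 0 i + ∑' n, u (n + 1) i := Summable.tsum_eq_zero_add (hsumm i)
    rw [h1, hxmul i, h2, hu00]
    have hcne : c ≠ 0 := hc0.ne'
    field_simp
    ring
  exact ⟨x, hxpos, fun i => by rw [hAx i]; norm_num⟩

lemma exists_eigenvector {M : Matrix (Fin d) (Fin d) ℂ} {z : ℂ} (h : M.charpoly.IsRoot z) :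
    ∃ v : Fin d → ℂ, v ≠ 0 ∧ M.mulVec v = z • v := by
  have hdet : (z • (1 : Matrix (Fin d) (Fin d) ℂ) - M).det = 0 := by
    rw [← eval_charpoly']; exact h
  obtain ⟨v, hv0, hv⟩ := Matrix.exists_mulVec_eq_zero_iff.mpr hdet
  refine ⟨v, hv0, ?_⟩
  rwa [Matrix.sub_mulVec, sub_eq_zero, Matrix.smul_mulVec, Matrix.one_mulVec, eq_comm] at hv


lemma hurwitz_of_le {M A : Matrix (Fin d) (Fin d) ℝ} (hM : Metzler M)
    (hMA : ∀ i j, M i j ≤ A i j) (x : Fin d → ℝ) (hx : ∀ i, 0 < x i)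
    (hAx : ∀ i, A.mulVec x i < 0) : IsHurwitz M := by
  intro z hz
  obtain ⟨v, hv0, hv⟩ := exists_eigenvector hz
  -- argmax of f j = ‖v j‖ / x j
  set f : Fin d → ℝ := fun j => ‖v j‖ / x j with hf
  obtain ⟨j0, hj0⟩ : ∃ j0, v j0 ≠ 0 := Function.ne_iff.mp hv0
  obtain ⟨i, -, hi⟩ := Finset.exists_max_image (Finset.univ : Finset (Fin d)) f
    ⟨j0, Finset.mem_univ j0⟩
  have hr : 0 < f i := lt_of_lt_of_le (div_pos (norm_pos_iff.mpr hj0) (hx j0))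
    (hi j0 (Finset.mem_univ j0))
  have hvj : ∀ j, ‖v j‖ ≤ f i * x j := fun j => by
    have := hi j (Finset.mem_univ j)
    rw [hf] at this
    calc ‖v j‖ = ‖v j‖ / x j * x j := by rw [div_mul_cancel₀ _ (hx j).ne']
    _ ≤ f i * x j := mul_le_mul_of_nonneg_right this (hx j).le
  have hvi : ‖v i‖ = f i * x i := by rw [hf]; rw [div_mul_cancel₀ _ (hx i).ne']
  -- eigen equation at i
  have heq : (z - (M i i : ℂ)) * v i = ∑ j ∈ Finset.univ.erase i, (M i j : ℂ) * v j := by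
    have h1 : ∑ j, (M i j : ℂ) * v j = z * v i := by
      have := congrFun hv i
      simpa [Matrix.mulVec, Matrix.map_apply, dotProduct, Pi.smul_apply, smul_eq_mul] using this
    have h2 : ∑ j ∈ Finset.univ.erase i, (M i j : ℂ) * v j
        = ∑ j, (M i j : ℂ) * v j - (M i i : ℂ) * v i := by
      rw [← Finset.sum_erase_add Finset.univ _ (Finset.mem_univ i)]; ring
    rw [h2, h1]; ring
  have hbound : ‖z - (M i i : ℂ)‖ * (f i * x i) ≤ f i * ∑ j ∈ Finset.univ.erase i, A i j * x j := by
    calc ‖z - (M i i : ℂ)‖ * (f i * x i) = ‖(z - (M i i : ℂ)) * v i‖ := by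
          rw [norm_mul, hvi]
    _ ≤ ∑ j ∈ Finset.univ.erase i, ‖(M i j : ℂ) * v j‖ := heq ▸ norm_sum_le _ _
    _ ≤ ∑ j ∈ Finset.univ.erase i, A i j * (f i * x j) := by
          refine Finset.sum_le_sum fun j hj => ?_
          have hji : i ≠ j := fun h => (Finset.mem_erase.mp hj).1 h.symm
          have hM0 : 0 ≤ M i j := hM i j hji
          rw [norm_mul, Complex.norm_real, Real.norm_eq_abs, abs_of_nonneg hM0]
          exact mul_le_mul (hMA i j) (hvj j) (norm_nonneg _) (le_trans hM0 (hMA i j))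
    _ = f i * ∑ j ∈ Finset.univ.erase i, A i j * x j := by
          rw [Finset.mul_sum]; exact Finset.sum_congr rfl fun j _ => by ring
  have hsum : ∑ j ∈ Finset.univ.erase i, A i j * x j < -(A i i * x i) := by
    have h3 : A.mulVec x i = ∑ j ∈ Finset.univ.erase i, A i j * x j + A i i * x i := by
      rw [Finset.sum_erase_add Finset.univ _ (Finset.mem_univ i)]; rfl
    have := hAx i
    rw [h3] at this; linarith
  have hmain : ‖z - (M i i : ℂ)‖ * x i < -(A i i) * x i := by
    have h4 : ‖z - (M i i : ℂ)‖ * (f i * x i) < f i * (-(A i i * x i)) :=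
      lt_of_le_of_lt hbound (by exact mul_lt_mul_of_pos_left hsum hr)
    nlinarith [hr, hx i]
  have h5 : ‖z - (M i i : ℂ)‖ < -(A i i) := by
    have := hx i
    nlinarith
  have h6 : z.re - M i i ≤ ‖z - (M i i : ℂ)‖ := by
    have := Complex.re_le_norm (z - (M i i : ℂ))
    simpa [Complex.sub_re, Complex.ofReal_re] using this
  have := hMA i i
  linarith

end Aux

theorem interval_hurwitz_iff_upper (Am Ap : Matrix (Fin d) (Fin d) ℝ)
    (hAm : Metzler Am) (hAp : Metzler Ap) (hle : ∀ i j, Am i j ≤ Ap i j) :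
    (∀ M : Matrix (Fin d) (Fin d) ℝ,
      (∀ i j, Am i j ≤ M i j) → (∀ i j, M i j ≤ Ap i j) → IsHurwitz M)
    ↔ IsHurwitz Ap := by
  constructor
  · intro h
    exact h Ap hle (fun i j => le_refl _)
  · intro hH M h1 h2
    have hM : Metzler M := fun i j hij => le_trans (hAm i j hij) (h1 i j)
    obtain ⟨x, hx, hAx⟩ := exists_pos_vec hAp hH
    exact hurwitz_of_le hM h2 x hx hAx
end

section
/- Let A⁺ be a Metzler Hurwitz stable matrix, q ∈ ℝ^d_{>0} a strictly positive vector, and set v₊ = −(A⁺)⁻ᵀ q. For any Δ with 0 ≤ Δ ≤ A⁺ − A⁻ entrywise (where A⁻ ≤ A⁺ is Metzler and A⁺ − Δ is Hurwitz stable), the vector v(Δ) := (I + Δ(A⁺ − Δ)⁻¹)ᵀ v₊ is strictly positive and satisfies v(Δ)ᵀ(A⁺ − Δ) = v₊ᵀA⁺ < 0 componentwise. -/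
open Matrix

variable {d : ℕ}

open Polynomial in
lemma charpoly_eval_cx (A : Matrix (Fin d) (Fin d) ℂ) (z : ℂ) :
    A.charpoly.eval z = (z • (1 : Matrix (Fin d) (Fin d) ℂ) - A).det := by
  rw [Matrix.charpoly, Polynomial.eval, ← Polynomial.coe_eval₂RingHom, RingHom.map_det]
  congr 1
  ext i j
  rcases eq_or_ne i j with rfl | h
  · simp [Matrix.charmatrix_apply_eq, Matrix.one_apply]
  · simp [Matrix.charmatrix_apply_ne _ _ _ h, Matrix.one_apply, h]

lemma hurwitz_shift_det (M : Matrix (Fin d) (Fin d) ℝ) (hH : IsHurwitz M) {s : ℝ} (hs : 0 ≤ s) :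
    IsUnit (M - s • (1 : Matrix (Fin d) (Fin d) ℝ)).det := by
  rw [isUnit_iff_ne_zero]
  intro h0
  have h1 : ((M - s • (1 : Matrix (Fin d) (Fin d) ℝ)).map Complex.ofReal).det = 0 := by
    have := (RingHom.map_det Complex.ofRealHom (M - s • (1 : Matrix (Fin d) (Fin d) ℝ))).symm
    rw [RingHom.mapMatrix_apply] at this
    rw [show ((M - s • (1 : Matrix (Fin d) (Fin d) ℝ)).map Complex.ofReal)
        = ((M - s • (1 : Matrix (Fin d) (Fin d) ℝ)).map Complex.ofRealHom) from rfl, this, h0,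
      map_zero]
  have h2 : ((M - s • (1 : Matrix (Fin d) (Fin d) ℝ)).map Complex.ofReal)
      = M.map Complex.ofReal - (s : ℂ) • (1 : Matrix (Fin d) (Fin d) ℂ) := by
    ext i j
    rcases eq_or_ne i j with rfl | h
    · simp [Matrix.map_apply, Matrix.one_apply]
    · simp [Matrix.map_apply, Matrix.one_apply, h]
  have h3 : ((s : ℂ) • (1 : Matrix (Fin d) (Fin d) ℂ) - M.map Complex.ofReal).det = 0 := by
    rw [show ((s : ℂ) • (1 : Matrix (Fin d) (Fin d) ℂ) - M.map Complex.ofReal)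
        = -(M.map Complex.ofReal - (s : ℂ) • (1 : Matrix (Fin d) (Fin d) ℂ)) from (neg_sub _ _).symm,
      Matrix.det_neg, ← h2, h1, mul_zero]
  have hroot : (M.map Complex.ofReal).charpoly.IsRoot (s : ℂ) := by
    rw [Polynomial.IsRoot, charpoly_eval_cx, h3]
  have := hH _ hroot
  rw [Complex.ofReal_re] at this
  linarith

lemma vecMul_smul_mat (v : Fin d → ℝ) (a : ℝ) (B : Matrix (Fin d) (Fin d) ℝ) :
    v ᵥ* (a • B) = a • (v ᵥ* B) := by
  ext i
  simp [Matrix.vecMul, dotProduct, Finset.mul_sum]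
  exact Finset.sum_congr rfl fun j _ => by ring

lemma metzler_hurwitz_pos (M : Matrix (Fin d) (Fin d) ℝ) (q : Fin d → ℝ)
    (hM : Metzler M) (hH : IsHurwitz M) (hq : ∀ i, 0 < q i) :
    ∀ i, 0 < ((-q) ᵥ* M⁻¹) i := by
  classical
  set g : ℝ → Matrix (Fin d) (Fin d) ℝ := fun s => M - s • 1 with hg
  have hdet : ∀ s : ℝ, 0 ≤ s → IsUnit (g s).det := fun s hs => hurwitz_shift_det M hH hs
  set w : ℝ → (Fin d → ℝ) := fun s => (-q) ᵥ* (g s)⁻¹ with hwdef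
  have hw : ∀ s : ℝ, 0 ≤ s → w s ᵥ* g s = -q := by
    intro s hs
    rw [hwdef]
    simp only
    rw [Matrix.vecMul_vecMul, Matrix.nonsing_inv_mul _ (hdet s hs), Matrix.vecMul_one]
  -- continuity
  have hgc : Continuous g := by
    apply continuous_const.sub
    exact (continuous_id.smul continuous_const)
  have hinvc : ContinuousOn (fun s => (g s)⁻¹) (Set.Ici (0:ℝ)) := by
    have h1 : ∀ s ∈ Set.Ici (0:ℝ), ((g s).det)⁻¹ • (g s).adjugate = (g s)⁻¹ := by
      intro s _
      rw [Matrix.inv_def, Ring.inverse_eq_inv]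
    refine ContinuousOn.congr ?_ fun s hs => (h1 s hs).symm
    exact ContinuousOn.smul
      (((hgc.matrix_det).continuousOn).inv₀ fun s hs => (isUnit_iff_ne_zero.mp (hdet s hs)))
      ((hgc.matrix_adjugate).continuousOn)
  have hwc : ∀ j, ContinuousOn (fun s => w s j) (Set.Ici (0:ℝ)) := by
    intro j
    have : (fun s => w s j) = fun s => ∑ k, (-q) k * (g s)⁻¹ k j := by
      funext s
      simp [hwdef, Matrix.vecMul, dotProduct]
    rw [this]
    apply continuousOn_finset_sum
    intro k _
    apply ContinuousOn.mul continuousOn_const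
    exact ((continuous_apply j).comp (continuous_apply k)).comp_continuousOn hinvc
  -- find a large S with w S > 0
  obtain ⟨u, hu0, hdetu, hFu⟩ : ∃ u : ℝ, 0 < u ∧
      ((1 : Matrix (Fin d) (Fin d) ℝ) - u • M).det ≠ 0 ∧
      ∀ i, 0 < (q ᵥ* ((1 : Matrix (Fin d) (Fin d) ℝ) - u • M)⁻¹) i := by
    have hhc : Continuous (fun u : ℝ => (1 : Matrix (Fin d) (Fin d) ℝ) - u • M) :=
      continuous_const.sub (continuous_id.smul continuous_const)
    have hinv0 : ContinuousAt (fun u : ℝ => ((1 : Matrix (Fin d) (Fin d) ℝ) - u • M)⁻¹) 0 := by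
      refine ContinuousAt.comp ?_ hhc.continuousAt
      apply continuousAt_matrix_inv
      have : ((1 : Matrix (Fin d) (Fin d) ℝ) - (0:ℝ) • M).det = 1 := by simp
      rw [this]
      rw [show (Ring.inverse : ℝ → ℝ) = Inv.inv from funext fun x => Ring.inverse_eq_inv x]
      exact continuousAt_inv₀ one_ne_zero
    have hdc : ContinuousAt (fun u : ℝ => ((1 : Matrix (Fin d) (Fin d) ℝ) - u • M).det) 0 :=
      (hhc.matrix_det).continuousAt
    have ev1 : ∀ᶠ u in nhds (0:ℝ), ((1 : Matrix (Fin d) (Fin d) ℝ) - u • M).det ≠ 0 := by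
      have h10 : ((1 : Matrix (Fin d) (Fin d) ℝ) - (0:ℝ) • M).det = 1 := by simp
      exact hdc.eventually_ne (by rw [h10]; exact one_ne_zero)
    have ev2 : ∀ᶠ u in nhds (0:ℝ),
        ∀ i, 0 < (q ᵥ* ((1 : Matrix (Fin d) (Fin d) ℝ) - u • M)⁻¹) i := by
      rw [Filter.eventually_all]
      intro i
      have hlin : Continuous (fun A : Matrix (Fin d) (Fin d) ℝ => (q ᵥ* A) i) := by
        have : (fun A : Matrix (Fin d) (Fin d) ℝ => (q ᵥ* A) i)
            = fun A => ∑ k, q k * A k i := by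
          funext A; simp [Matrix.vecMul, dotProduct]
        rw [this]
        exact continuous_finset_sum _ fun k _ =>
          continuous_const.mul ((continuous_apply i).comp (continuous_apply k))
      have hcomp : ContinuousAt (fun u : ℝ =>
          (q ᵥ* ((1 : Matrix (Fin d) (Fin d) ℝ) - u • M)⁻¹) i) 0 :=
        hlin.continuousAt.comp hinv0
      have hval : (q ᵥ* ((1 : Matrix (Fin d) (Fin d) ℝ) - (0:ℝ) • M)⁻¹) i = q i := by
        simp
      have hval0 : (0:ℝ) < (q ᵥ* ((1 : Matrix (Fin d) (Fin d) ℝ) - (0:ℝ) • M)⁻¹) i := by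
        rw [hval]; exact hq i
      exact Filter.Tendsto.eventually hcomp (eventually_gt_nhds hval0)
    have := (ev1.and ev2).filter_mono (nhdsWithin_le_nhds (s := Set.Ioi (0:ℝ)))
    obtain ⟨u, hu, hu2⟩ := (this.and self_mem_nhdsWithin).exists
    exact ⟨u, hu2, hu.1, hu.2⟩
  set S : ℝ := u⁻¹ with hSdef
  have hS : 0 < S := inv_pos.mpr hu0
  set B : Matrix (Fin d) (Fin d) ℝ := (1 : Matrix (Fin d) (Fin d) ℝ) - u • M with hBdef
  have hSu : S * u = 1 := inv_mul_cancel₀ hu0.ne'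
  have huS : u * S = 1 := mul_inv_cancel₀ hu0.ne'
  have hgS : g S = (-S) • B := by
    ext i j
    simp only [hg, hBdef, hSdef, Matrix.sub_apply, Matrix.smul_apply, Matrix.one_apply]
    rcases eq_or_ne i j with rfl | h
    · simp only [if_pos rfl, ↓reduceIte, smul_eq_mul]
      linear_combination (-(M i i)) * (inv_mul_cancel₀ hu0.ne')
    · simp only [if_neg h, smul_eq_mul]
      linear_combination (-(M i j)) * (inv_mul_cancel₀ hu0.ne')
  have hBunit : IsUnit B.det := isUnit_iff_ne_zero.mpr hdetu
  have hwS : w S = u • (q ᵥ* B⁻¹) := by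
    have h2 : (u • (q ᵥ* B⁻¹)) ᵥ* g S = -q := by
      rw [hgS, Matrix.smul_vecMul, vecMul_smul_mat, Matrix.vecMul_vecMul,
        Matrix.nonsing_inv_mul _ hBunit, Matrix.vecMul_one]
      funext i
      show u * (-S * q i) = -q i
      rw [hSdef]
      field_simp
    have h1 := hw S hS.le
    have h3 := h1.trans h2.symm
    have h4 := congrArg (fun v => v ᵥ* (g S)⁻¹) h3
    simp only [Matrix.vecMul_vecMul] at h4
    rwa [Matrix.mul_nonsing_inv _ (hdet S hS.le), Matrix.vecMul_one, Matrix.vecMul_one] at h4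
  have hwSpos : ∀ i, 0 < w S i := by
    intro i
    rw [hwS]
    simpa using mul_pos hu0 (hFu i)
  -- topological argument
  have hg0 : g 0 = M := by simp [hg]
  suffices hpos : ∀ i, 0 < w 0 i by
    intro i
    have h : 0 < ((-q) ᵥ* (g 0)⁻¹) i := hpos i
    rwa [hg0] at h
  by_contra hcon
  push_neg at hcon
  obtain ⟨i₀, hi₀⟩ := hcon
  set Bset : Set ℝ := {s | s ∈ Set.Icc 0 S ∧ ∃ i, w s i ≤ 0} with hBsetdef
  have hBne : Bset.Nonempty := ⟨0, ⟨le_refl 0, hS.le⟩, i₀, hi₀⟩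
  have hwcIcc : ∀ j, ContinuousOn (fun s => w s j) (Set.Icc 0 S) :=
    fun j => (hwc j).mono (fun s hs => hs.1)
  have hBclosed : IsClosed Bset := by
    have : Bset = ⋃ i, (Set.Icc 0 S ∩ (fun s => w s i) ⁻¹' Set.Iic 0) := by
      ext s
      simp only [hBsetdef, Set.mem_setOf_eq, Set.mem_iUnion, Set.mem_inter_iff,
        Set.mem_preimage, Set.mem_Iic]
      tauto
    rw [this]
    exact isClosed_iUnion_of_finite fun i =>
      (hwcIcc i).preimage_isClosed_of_isClosed isClosed_Icc isClosed_Iic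
  have hBcompact : IsCompact Bset :=
    isCompact_Icc.of_isClosed_subset hBclosed fun s hs => hs.1
  obtain ⟨s₁, hs₁B, hs₁max⟩ := hBcompact.exists_isGreatest hBne
  have hs₁lt : s₁ < S := by
    rcases lt_or_eq_of_le hs₁B.1.2 with h | h
    · exact h
    · exfalso; obtain ⟨i, hi⟩ := hs₁B.2; rw [h] at hi; linarith [hwSpos i]
  have hpos_right : ∀ s ∈ Set.Ioc s₁ S, ∀ i, 0 < w s i := by
    intro s hs i
    by_contra hle
    push_neg at hle
    have : s ∈ Bset := ⟨⟨le_trans hs₁B.1.1 hs.1.le, hs.2⟩, i, hle⟩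
    exact absurd (hs₁max this) (not_le.mpr hs.1)
  have hnonneg : ∀ j, 0 ≤ w s₁ j := by
    intro j
    have hsub : Set.Ioc s₁ S ⊆ Set.Icc 0 S :=
      fun s hs => ⟨le_trans hs₁B.1.1 hs.1.le, hs.2⟩
    have htend : Filter.Tendsto (fun s => w s j) (nhdsWithin s₁ (Set.Ioc s₁ S)) (nhds (w s₁ j)) :=
      ((hwcIcc j s₁ hs₁B.1).mono hsub).tendsto
    have hne : (nhdsWithin s₁ (Set.Ioc s₁ S)).NeBot := by
      rw [nhdsWithin_Ioc_eq_nhdsGT hs₁lt]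
      infer_instance
    refine ge_of_tendsto htend ?_
    filter_upwards [self_mem_nhdsWithin] with s hs using (hpos_right s hs j).le
  obtain ⟨i, hi⟩ := hs₁B.2
  have hizero : w s₁ i = 0 := le_antisymm hi (hnonneg i)
  have heq : (w s₁ ᵥ* g s₁) i = -q i := by rw [hw s₁ hs₁B.1.1]; simp
  have hge : 0 ≤ (w s₁ ᵥ* g s₁) i := by
    show 0 ≤ ∑ j, w s₁ j * (g s₁) j i
    apply Finset.sum_nonneg
    intro j _
    rcases eq_or_ne j i with rfl | hji
    · rw [hizero]; simp
    · have hentry : (g s₁) j i = M j i := by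
        simp [hg, Matrix.sub_apply, Matrix.smul_apply, Matrix.one_apply, hji]
      rw [hentry]
      exact mul_nonneg (hnonneg j) (hM j i hji)
  rw [heq] at hge
  linarith [hq i]

theorem robust_stability_certificate (Am Ap Δ : Matrix (Fin d) (Fin d) ℝ) (q : Fin d → ℝ)
    (hAm : Metzler Am) (hAp : Metzler Ap) (hle : ∀ i j, Am i j ≤ Ap i j)
    (hHp : IsHurwitz Ap) (hq : ∀ i, 0 < q i)
    (hΔ1 : ∀ i j, 0 ≤ Δ i j) (hΔ2 : ∀ i j, Δ i j ≤ Ap i j - Am i j)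
    (hHB : IsHurwitz (Ap - Δ)) :
    let vp : Fin d → ℝ := (-(Ap⁻¹)ᵀ) *ᵥ q
    let vΔ : Fin d → ℝ := ((1 + Δ * (Ap - Δ)⁻¹)ᵀ) *ᵥ vp
    (∀ i, 0 < vΔ i) ∧ vΔ ᵥ* (Ap - Δ) = vp ᵥ* Ap ∧ ∀ j, (vp ᵥ* Ap) j < 0 := by
  intro vp vΔ
  have hdAp : IsUnit Ap.det := by
    have := hurwitz_shift_det Ap hHp (le_refl (0:ℝ))
    simpa using this
  have hdB : IsUnit (Ap - Δ).det := by
    have := hurwitz_shift_det (Ap - Δ) hHB (le_refl (0:ℝ))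
    simpa using this
  have hvp : vp = (-q) ᵥ* Ap⁻¹ := by
    show (-(Ap⁻¹)ᵀ) *ᵥ q = (-q) ᵥ* Ap⁻¹
    rw [← Matrix.transpose_neg, Matrix.mulVec_transpose, Matrix.vecMul_neg, ← Matrix.neg_vecMul]
  have hvpAp : vp ᵥ* Ap = -q := by
    rw [hvp, Matrix.vecMul_vecMul, Matrix.nonsing_inv_mul _ hdAp, Matrix.vecMul_one]
  have claim3 : ∀ j, (vp ᵥ* Ap) j < 0 := by
    intro j
    rw [hvpAp]
    simpa using hq j
  have hvΔeq : vΔ ᵥ* (Ap - Δ) = vp ᵥ* Ap := by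
    show (((1 + Δ * (Ap - Δ)⁻¹)ᵀ) *ᵥ vp) ᵥ* (Ap - Δ) = vp ᵥ* Ap
    rw [Matrix.mulVec_transpose, Matrix.vecMul_vecMul]
    congr 1
    rw [add_mul, one_mul, Matrix.mul_assoc, Matrix.nonsing_inv_mul _ hdB, Matrix.mul_one,
      sub_add_cancel]
  have hMB : Metzler (Ap - Δ) := by
    intro i j hij
    have h1 := hAm i j hij
    have h2 := hΔ2 i j
    simp only [Matrix.sub_apply]
    linarith
  have hveq : vΔ = (-q) ᵥ* (Ap - Δ)⁻¹ := by
    have h1 : vΔ ᵥ* (Ap - Δ) = -q := hvΔeq.trans hvpAp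
    have h4 := congrArg (fun v => v ᵥ* (Ap - Δ)⁻¹) h1
    simp only [Matrix.vecMul_vecMul] at h4
    rwa [Matrix.mul_nonsing_inv _ hdB, Matrix.vecMul_one] at h4
  refine ⟨?_, hvΔeq, claim3⟩
  intro i
  rw [hveq]
  exact metzler_hurwitz_pos (Ap - Δ) q hMB hHB hq i
end

section
/- Let A⁻ be a Metzler Hurwitz stable matrix and suppose w₋ ∈ ℝ^d_{≥0} satisfies w₋ᵀA⁻ + e_ℓᵀ = 0 and w₋ᵀe₁ > 0. Then for any Δ ≥ 0 entrywise such that A⁻ + Δ is Metzler and Hurwitz stable, the vector w(Δ) := (A⁻(A⁻ + Δ)⁻¹)ᵀ w₋ satisfies: (i) w(Δ) ≥ w₋ ≥ 0 entrywise, (ii) w(Δ)ᵀe₁ ≥ w₋ᵀe₁ > 0, and (iii) w(Δ)ᵀ(A⁻ + Δ) + e_ℓᵀ = 0. -/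
open Matrix

variable {d : ℕ}

namespace RobustCertAux

open Set Filter Topology Polynomial

lemma entry_mul_nonneg {A B : Matrix (Fin d) (Fin d) ℝ}
    (hA : ∀ i j, 0 ≤ A i j) (hB : ∀ i j, 0 ≤ B i j) : ∀ i j, 0 ≤ (A * B) i j := by
  intro i j
  rw [Matrix.mul_apply]
  exact Finset.sum_nonneg fun k _ => mul_nonneg (hA i k) (hB k j)

lemma entry_pow_nonneg {A : Matrix (Fin d) (Fin d) ℝ}
    (hA : ∀ i j, 0 ≤ A i j) : ∀ k i j, 0 ≤ (A ^ k) i j := by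
  intro k
  induction k with
  | zero => intro i j; simp [Matrix.one_apply]; split <;> norm_num
  | succ n ih => rw [pow_succ]; exact entry_mul_nonneg ih hA

section Geom

attribute [local instance] Matrix.linftyOpNormedAddCommGroup Matrix.linftyOpNormedRing
  Matrix.linftyOpNormedAlgebra Matrix.linftyOpNormedSpace

/-- For entrywise nonnegative `X` and small enough `δ ≥ 0`, the matrix `1 - δ • X`
has an entrywise nonnegative right inverse (the geometric series). -/
lemma exists_geom_inv (X : Matrix (Fin d) (Fin d) ℝ) (hX : ∀ i j, 0 ≤ X i j) :
    ∃ ε > 0, ∀ δ : ℝ, 0 ≤ δ → δ < ε →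
      ∃ B, (1 - δ • X) * B = 1 ∧ ∀ i j, 0 ≤ B i j := by
  refine ⟨(‖X‖ + 1)⁻¹, by positivity, fun δ h0 hδ => ?_⟩
  have hX1 : (0:ℝ) < ‖X‖ + 1 := by positivity
  have hnorm : ‖δ • X‖ < 1 := by
    rw [norm_smul, Real.norm_of_nonneg h0]
    calc δ * ‖X‖ ≤ δ * (‖X‖ + 1) := by nlinarith [norm_nonneg X]
    _ < 1 := by
        rw [inv_eq_one_div, lt_div_iff₀ hX1] at hδ
        linarith
  have hsum : Summable (fun k => (δ • X) ^ k) := summable_geometric_of_norm_lt_one hnorm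
  refine ⟨∑' k, (δ • X) ^ k, mul_neg_geom_series _ hnorm, fun i j => ?_⟩
  have hentry : (∑' k, (δ • X) ^ k) i j = ∑' k, ((δ • X) ^ k) i j := by
    let e : Matrix (Fin d) (Fin d) ℝ →ₗ[ℝ] ℝ :=
      { toFun := fun A => A i j, map_add' := fun _ _ => rfl, map_smul' := fun _ _ => rfl }
    exact (LinearMap.toContinuousLinearMap e).map_tsum hsum
  rw [hentry]
  refine tsum_nonneg fun k => entry_pow_nonneg (fun i j => ?_) k i j
  exact smul_nonneg h0 (hX i j)

end Geom

/-- If `N` is entrywise nonnegative and `t • 1 - N` is nonsingular for all `t ≥ s`,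
then `(s • 1 - N)⁻¹` is entrywise nonnegative. -/
lemma resolvent_nonneg (N : Matrix (Fin d) (Fin d) ℝ) (hN : ∀ i j, 0 ≤ N i j) (s : ℝ)
    (hdet : ∀ t : ℝ, s ≤ t → (t • (1 : Matrix (Fin d) (Fin d) ℝ) - N).det ≠ 0) :
    ∀ i j, 0 ≤ (s • (1 : Matrix (Fin d) (Fin d) ℝ) - N)⁻¹ i j := by
  set R : ℝ → Matrix (Fin d) (Fin d) ℝ := fun t => (t • 1 - N)⁻¹ with hRdef
  -- continuity of R at points t ≥ s
  have hRcont : ∀ t : ℝ, s ≤ t → ContinuousAt R t := by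
    intro t ht
    have h1 : ContinuousAt Inv.inv (t • (1 : Matrix (Fin d) (Fin d) ℝ) - N) := by
      refine continuousAt_matrix_inv _ ?_
      rw [Ring.inverse_eq_inv']
      exact continuousAt_inv₀ (hdet t ht)
    have h2 : Continuous fun u : ℝ => u • (1 : Matrix (Fin d) (Fin d) ℝ) - N :=
      (continuous_id.smul continuous_const).sub continuous_const
    exact Filter.Tendsto.comp h1 h2.continuousAt
  -- inverse identity
  have hRinv : ∀ t : ℝ, s ≤ t → (t • (1 : Matrix (Fin d) (Fin d) ℝ) - N) * R t = 1 := by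
    intro t ht
    exact Matrix.mul_nonsing_inv _ (isUnit_iff_ne_zero.mpr (hdet t ht))
  -- base point
  obtain ⟨ε₀, hε₀, hg₀⟩ := exists_geom_inv N hN
  set t₀ : ℝ := max s ε₀⁻¹ + 1 with ht₀def
  have hmax : ε₀⁻¹ ≤ max s ε₀⁻¹ := le_max_right _ _
  have hsmax : s ≤ max s ε₀⁻¹ := le_max_left _ _
  have hst₀ : s ≤ t₀ := by rw [ht₀def]; linarith
  have hεt₀ : ε₀⁻¹ < t₀ := by rw [ht₀def]; linarith
  have ht₀pos : 0 < t₀ := lt_of_le_of_lt (by positivity) hεt₀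
  have ht₀inv : t₀⁻¹ < ε₀ := by
    rw [inv_lt_comm₀ ht₀pos hε₀]
    exact hεt₀
  have ht₀K : ∀ i j, 0 ≤ R t₀ i j := by
    obtain ⟨B, hB1, hB2⟩ := hg₀ t₀⁻¹ (by positivity) ht₀inv
    have key : (t₀ • (1 : Matrix (Fin d) (Fin d) ℝ) - N) * (t₀⁻¹ • B) = 1 := by
      have h1 : t₀ • (1 : Matrix (Fin d) (Fin d) ℝ) - N
          = t₀ • ((1 : Matrix (Fin d) (Fin d) ℝ) - t₀⁻¹ • N) := by
        rw [smul_sub, smul_smul, mul_inv_cancel₀ (ne_of_gt ht₀pos), one_smul]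
      rw [h1, Matrix.smul_mul, Matrix.mul_smul, hB1, smul_smul,
        mul_inv_cancel₀ (ne_of_gt ht₀pos), one_smul]
    intro i j
    have hEq : R t₀ = t₀⁻¹ • B := Matrix.inv_eq_right_inv key
    rw [hEq, Matrix.smul_apply]
    exact smul_nonneg (inv_nonneg.mpr ht₀pos.le) (hB2 i j)
  -- the set of "good" thresholds
  set A : Set ℝ := {t | t ∈ Icc s t₀ ∧ ∀ u ∈ Icc t t₀, ∀ i j, 0 ≤ R u i j} with hAdef
  have ht₀A : t₀ ∈ A := by
    refine ⟨⟨hst₀, le_refl _⟩, fun u hu i j => ?_⟩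
    have : u = t₀ := le_antisymm hu.2 hu.1
    rw [this]; exact ht₀K i j
  have hAne : A.Nonempty := ⟨t₀, ht₀A⟩
  have hbdd : BddBelow A := ⟨s, fun t ht => ht.1.1⟩
  set c : ℝ := sInf A with hcdef
  have hsc : s ≤ c := le_csInf hAne fun t ht => ht.1.1
  have hct₀ : c ≤ t₀ := csInf_le hbdd ht₀A
  have hIoc : ∀ u, c < u → u ≤ t₀ → ∀ i j, 0 ≤ R u i j := by
    intro u hcu hut i j
    obtain ⟨t, htA, htu⟩ := exists_lt_of_csInf_lt hAne hcu
    exact htA.2 u ⟨le_of_lt htu, hut⟩ i j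
  have hcK : ∀ i j, 0 ≤ R c i j := by
    rcases eq_or_lt_of_le hct₀ with h | h
    · rw [h]; exact ht₀K
    · intro i j
      have htend : Tendsto (fun u => R u i j) (𝓝[>] c) (𝓝 (R c i j)) := by
        have hc : ContinuousAt (fun u => R u i j) c :=
          ((continuous_apply j).continuousAt.comp
            ((continuous_apply i).continuousAt.comp (hRcont c hsc)))
        exact hc.continuousWithinAt.tendsto
      refine ge_of_tendsto htend ?_
      have hev : ∀ᶠ u in 𝓝[>] c, u < t₀ :=
        eventually_nhdsWithin_of_eventually_nhds (eventually_lt_nhds h)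
      filter_upwards [hev, self_mem_nhdsWithin] with u hu1 hu2
      exact hIoc u hu2 (le_of_lt hu1) i j
  have hcs : c = s := by
    by_contra hne
    have hsc' : s < c := lt_of_le_of_ne hsc (Ne.symm hne)
    obtain ⟨ε, hε, hg⟩ := exists_geom_inv (R c) hcK
    set t' : ℝ := max s (c - ε / 2) with ht'def
    have ht'c : t' < c := max_lt hsc' (by linarith)
    have hst' : s ≤ t' := le_max_left _ _
    have hstep : ∀ u, t' ≤ u → u < c → ∀ i j, 0 ≤ R u i j := by
      intro u h1 h2
      have hδ0 : 0 ≤ c - u := by linarith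
      have hδε : c - u < ε := by
        have : c - ε / 2 ≤ t' := le_max_right _ _
        linarith
      obtain ⟨B, hB1, hB2⟩ := hg (c - u) hδ0 hδε
      have hsu : s ≤ u := le_trans hst' h1
      have key : (u • (1 : Matrix (Fin d) (Fin d) ℝ) - N) * (B * R c) = 1 := by
        have hfac : u • (1 : Matrix (Fin d) (Fin d) ℝ) - N
            = (c • (1 : Matrix (Fin d) (Fin d) ℝ) - N) * (1 - (c - u) • R c) := by
          rw [Matrix.mul_sub, Matrix.mul_smul, hRinv c hsc, mul_one, sub_smul]
          abel
        rw [hfac, mul_assoc, ← mul_assoc (1 - (c - u) • R c), hB1, one_mul, hRinv c hsc]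
      intro i j
      have hEq : R u = B * R c := Matrix.inv_eq_right_inv key
      rw [hEq]
      exact entry_mul_nonneg hB2 hcK i j
    have ht'A : t' ∈ A := by
      refine ⟨⟨hst', le_trans (le_of_lt ht'c) hct₀⟩, fun u hu i j => ?_⟩
      rcases lt_or_ge u c with h | h
      · exact hstep u hu.1 h i j
      · rcases eq_or_lt_of_le h with h' | h'
        · rw [← h']; exact hcK i j
        · exact hIoc u h' hu.2 i j
    exact absurd (csInf_le hbdd ht'A) (not_le.mpr ht'c)
  have := hcK
  rw [hcs] at this
  exact this

lemma charpoly_eval_real (M : Matrix (Fin d) (Fin d) ℝ) (t : ℝ) :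
    M.charpoly.eval t = (t • (1 : Matrix (Fin d) (Fin d) ℝ) - M).det := by
  rw [Matrix.charpoly, _root_.eval_det, Matrix.matPolyEquiv_charmatrix]
  congr 1
  rw [eval_sub, eval_X, eval_C]
  congr 1
  ext i j
  simp [Matrix.scalar_apply, Matrix.diagonal_apply, Matrix.one_apply]

lemma hurwitz_det_ne (M : Matrix (Fin d) (Fin d) ℝ) (hH : IsHurwitz M) :
    ∀ t : ℝ, 0 ≤ t → (t • (1 : Matrix (Fin d) (Fin d) ℝ) - M).det ≠ 0 := by
  intro t ht h0
  have hroot : M.charpoly.eval t = 0 := by rw [charpoly_eval_real]; exact h0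
  have hmap : (M.map Complex.ofReal).charpoly.IsRoot (t : ℂ) := by
    have h1 : M.map Complex.ofReal = M.map Complex.ofRealHom := rfl
    rw [h1, Matrix.charpoly_map, IsRoot, eval_map]
    have h2 : (t : ℂ) = Complex.ofRealHom t := rfl
    rw [h2, Polynomial.eval₂_at_apply, hroot]
    simp
  have := hH _ hmap
  rw [Complex.ofReal_re] at this
  linarith

/-- The inverse of a Metzler Hurwitz-stable matrix is entrywise nonpositive,
and its determinant is a unit. -/
lemma metzler_hurwitz_inv_nonpos (P : Matrix (Fin d) (Fin d) ℝ)
    (hMz : Metzler P) (hH : IsHurwitz P) :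
    IsUnit P.det ∧ ∀ i j, P⁻¹ i j ≤ 0 := by
  have hdetP := hurwitz_det_ne P hH
  have hPdet : IsUnit P.det := by
    have h0 := hdetP 0 le_rfl
    rw [zero_smul, zero_sub, Matrix.det_neg] at h0
    refine isUnit_iff_ne_zero.mpr fun h => h0 ?_
    rw [h, mul_zero]
  refine ⟨hPdet, ?_⟩
  set σ : ℝ := ∑ i, |P i i| with hσdef
  have hσi : ∀ i, -P i i ≤ σ := by
    intro i
    refine le_trans (neg_le_abs _) ?_
    exact Finset.single_le_sum (f := fun i => |P i i|) (fun _ _ => abs_nonneg _)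
      (Finset.mem_univ i)
  set N : Matrix (Fin d) (Fin d) ℝ := P + σ • 1 with hNdef
  have hN : ∀ i j, 0 ≤ N i j := by
    intro i j
    rw [hNdef]
    by_cases h : i = j
    · subst h
      simp only [Matrix.add_apply, Matrix.smul_apply, Matrix.one_apply_eq, smul_eq_mul, mul_one]
      linarith [hσi i]
    · simp only [Matrix.add_apply, Matrix.smul_apply, Matrix.one_apply_ne h, smul_eq_mul,
        mul_zero, add_zero]
      exact hMz i j h
  have hNdet : ∀ t : ℝ, σ ≤ t → (t • (1 : Matrix (Fin d) (Fin d) ℝ) - N).det ≠ 0 := by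
    intro t ht
    have heq2 : t • (1 : Matrix (Fin d) (Fin d) ℝ) - N
        = (t - σ) • (1 : Matrix (Fin d) (Fin d) ℝ) - P := by
      rw [hNdef, sub_smul]; abel
    rw [heq2]
    exact hdetP (t - σ) (by linarith)
  have hres := resolvent_nonneg N hN σ hNdet
  have hPN : σ • (1 : Matrix (Fin d) (Fin d) ℝ) - N = -P := by rw [hNdef]; abel
  have hPinv : (-P)⁻¹ = -(P⁻¹) := by
    apply Matrix.inv_eq_right_inv
    rw [Matrix.neg_mul, Matrix.mul_neg, neg_neg, Matrix.mul_nonsing_inv _ hPdet]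
  intro i j
  have h := hres i j
  rw [hPN, hPinv, Matrix.neg_apply] at h
  linarith

end RobustCertAux

theorem robust_output_controllability_certificate [NeZero d]
    (Am Δ : Matrix (Fin d) (Fin d) ℝ) (wm : Fin d → ℝ) (ℓ : Fin d)
    (hAm : Metzler Am) (hH : IsHurwitz Am)
    (hwm : ∀ i, 0 ≤ wm i)
    (heq : wm ᵥ* Am + Pi.single ℓ 1 = 0)
    (hw1 : 0 < wm 0)
    (hΔ : ∀ i j, 0 ≤ Δ i j)
    (hMz : Metzler (Am + Δ)) (hHΔ : IsHurwitz (Am + Δ)) :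
    let wΔ : Fin d → ℝ := (Am * (Am + Δ)⁻¹)ᵀ *ᵥ wm
    (∀ i, wm i ≤ wΔ i) ∧ (wm 0 ≤ wΔ 0 ∧ 0 < wΔ 0) ∧
    wΔ ᵥ* (Am + Δ) + Pi.single ℓ 1 = 0 := by
  intro wΔ
  obtain ⟨hPdet, hPinv⟩ := RobustCertAux.metzler_hurwitz_inv_nonpos (Am + Δ) hMz hHΔ
  have hwΔ : wΔ = wm ᵥ* (Am * (Am + Δ)⁻¹) := Matrix.mulVec_transpose _ _
  have h3 : wΔ ᵥ* (Am + Δ) + Pi.single ℓ 1 = 0 := by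
    rw [hwΔ, Matrix.vecMul_vecMul, mul_assoc, Matrix.nonsing_inv_mul _ hPdet, mul_one]
    exact heq
  have h1 : ∀ i, wm i ≤ wΔ i := by
    intro i
    have hAmP : Am * (Am + Δ)⁻¹ = 1 - Δ * (Am + Δ)⁻¹ := by
      have hAm' : Am = (Am + Δ) - Δ := by abel
      nth_rewrite 1 [hAm']
      rw [Matrix.sub_mul, Matrix.mul_nonsing_inv _ hPdet]
    have hentry : (wm ᵥ* (Δ * (Am + Δ)⁻¹)) i ≤ 0 := by
      rw [Matrix.vecMul, dotProduct]
      refine Finset.sum_nonpos fun j _ => mul_nonpos_of_nonneg_of_nonpos (hwm j) ?_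
      rw [Matrix.mul_apply]
      exact Finset.sum_nonpos fun k _ => mul_nonpos_of_nonneg_of_nonpos (hΔ j k) (hPinv k i)
    have hsub : wΔ i = wm i - (wm ᵥ* (Δ * (Am + Δ)⁻¹)) i := by
      rw [hwΔ, hAmP, Matrix.vecMul_sub, Matrix.vecMul_one, Pi.sub_apply]
    rw [hsub]
    linarith
  exact ⟨h1, ⟨h1 0, lt_of_lt_of_le hw1 (h1 0)⟩, h3⟩
end

section
/- Let A⁻ ≤ A⁺ be Metzler matrices. The following are equivalent: (a) every M ∈ [A⁻, A⁺] is Hurwitz stable and for every M ∈ [A⁻, A⁺] there exists w ∈ ℝ^d_{≥0} with w₁ > 0 and wᵀM + e_ℓᵀ = 0; (b) there exist v₊ ∈ ℝ^d_{>0} and w₋ ∈ ℝ^d_{≥0} with v₊ᵀA⁺ < 0, w₋ᵀe₁ > 0 and w₋ᵀA⁻ + e_ℓᵀ = 0. -/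
open Matrix

variable {d : ℕ}

section Auxiliary

open Polynomial

attribute [local instance] Matrix.linftyOpNormedRing Matrix.linftyOpNormedAlgebra

lemma charpoly_eval (M : Matrix (Fin d) (Fin d) ℂ) (z : ℂ) :
    M.charpoly.eval z = (z • (1 : Matrix (Fin d) (Fin d) ℂ) - M).det := by
  rw [Matrix.charpoly, ← Polynomial.coe_evalRingHom, RingHom.map_det]
  congr 1
  ext i j
  by_cases h : i = j <;>
    simp [h, Matrix.charmatrix_apply, Matrix.one_apply, Matrix.diagonal_apply]

lemma charpoly_isRoot_iff (M : Matrix (Fin d) (Fin d) ℂ) (z : ℂ) :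
    M.charpoly.IsRoot z ↔ ∃ x : Fin d → ℂ, x ≠ 0 ∧ M *ᵥ x = z • x := by
  rw [Polynomial.IsRoot, charpoly_eval, ← Matrix.exists_mulVec_eq_zero_iff]
  constructor
  · rintro ⟨x, hx, hMx⟩
    refine ⟨x, hx, ?_⟩
    rw [Matrix.sub_mulVec, Matrix.smul_mulVec, Matrix.one_mulVec, sub_eq_zero] at hMx
    exact hMx.symm
  · rintro ⟨x, hx, hMx⟩
    refine ⟨x, hx, ?_⟩
    rw [Matrix.sub_mulVec, Matrix.smul_mulVec, Matrix.one_mulVec, sub_eq_zero, hMx]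

lemma charpoly_transpose (M : Matrix (Fin d) (Fin d) ℂ) : Mᵀ.charpoly = M.charpoly := by
  rw [Matrix.charpoly, Matrix.charpoly, ← Matrix.det_transpose (Matrix.charmatrix Mᵀ)]
  congr 1
  ext i j
  by_cases h : i = j
  · subst h; simp [Matrix.charmatrix_apply, Matrix.diagonal_apply]
  · simp [Matrix.charmatrix_apply, Matrix.diagonal_apply, h, Ne.symm h, Matrix.transpose_apply]

lemma vecMul_apply' (v : Fin d → ℝ) (M : Matrix (Fin d) (Fin d) ℝ) (j : Fin d) :
    (v ᵥ* M) j = ∑ i, v i * M i j := rfl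

lemma nonpos_of_vecMul_nonneg [NeZero d] (M : Matrix (Fin d) (Fin d) ℝ) (hM : Metzler M)
    (v : Fin d → ℝ) (hv : ∀ i, 0 < v i) (hvM : ∀ j, (v ᵥ* M) j < 0)
    (u : Fin d → ℝ) (hu : ∀ j, 0 ≤ (u ᵥ* M) j) : ∀ i, u i ≤ 0 := by
  haveI : Nonempty (Fin d) := Fin.pos_iff_nonempty.mp (Nat.pos_of_ne_zero (NeZero.ne d))
  obtain ⟨i, -, hi⟩ := Finset.exists_max_image Finset.univ (fun j => u j / v j)
    ⟨Classical.arbitrary _, Finset.mem_univ _⟩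
  set c := u i / v i with hc
  have hub : ∀ j, u j ≤ c * v j := fun j => by
    have := hi j (Finset.mem_univ j)
    calc u j = u j / v j * v j := by rw [div_mul_cancel₀]; exact (hv j).ne'
    _ ≤ c * v j := by nlinarith [hv j]
  have hci : u i = c * v i := by rw [hc, div_mul_cancel₀]; exact (hv i).ne'
  have hcle : c ≤ 0 := by
    by_contra hcpos
    push_neg at hcpos
    have key : (u ᵥ* M) i ≤ c * (v ᵥ* M) i := by
      rw [vecMul_apply', vecMul_apply', Finset.mul_sum]
      apply Finset.sum_le_sum
      intro j _
      by_cases hji : j = i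
      · subst hji; rw [hci]; ring_nf; rfl
      · have h1 : 0 ≤ M j i := hM j i hji
        have := hub j
        nlinarith
    nlinarith [hu i, hvM i]
  intro j
  calc u j ≤ c * v j := hub j
  _ ≤ 0 := by nlinarith [hv j]

lemma hurwitz_of_pos_left_vec [NeZero d] (M : Matrix (Fin d) (Fin d) ℝ) (hM : Metzler M)
    (v : Fin d → ℝ) (hv : ∀ i, 0 < v i) (hvM : ∀ j, (v ᵥ* M) j < 0) : IsHurwitz M := by
  intro z hz
  -- move to the transpose
  have hz' : ((M.map (Complex.ofReal))ᵀ).charpoly.IsRoot z := by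
    rwa [charpoly_transpose]
  obtain ⟨x, hx, hMx⟩ := (charpoly_isRoot_iff _ z).mp hz'
  haveI : Nonempty (Fin d) := Fin.pos_iff_nonempty.mp (Nat.pos_of_ne_zero (NeZero.ne d))
  obtain ⟨i, -, hi⟩ := Finset.exists_max_image Finset.univ (fun j => ‖x j‖ / v j)
    ⟨Classical.arbitrary _, Finset.mem_univ _⟩
  set c := ‖x i‖ / v i with hc
  have hcpos : 0 < c := by
    obtain ⟨j, hj⟩ := Function.ne_iff.mp hx
    have h1 : 0 < ‖x j‖ / v j := div_pos (norm_pos_iff.mpr hj) (hv j)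
    exact lt_of_lt_of_le h1 (hi j (Finset.mem_univ j))
  have hub : ∀ j, ‖x j‖ ≤ c * v j := fun j => by
    have := hi j (Finset.mem_univ j)
    calc ‖x j‖ = ‖x j‖ / v j * v j := by rw [div_mul_cancel₀]; exact (hv j).ne'
    _ ≤ c * v j := by nlinarith [hv j]
  have hxi : ‖x i‖ = c * v i := by rw [hc, div_mul_cancel₀]; exact (hv i).ne'
  -- the eigen equation at row i
  have heig : ∑ j, (M j i : ℂ) * x j = z * x i := by
    have := congrFun hMx i
    simpa [Matrix.mulVec, dotProduct, Matrix.transpose_apply, Matrix.map_apply] using this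
  have hsplit : (z - (M i i : ℂ)) * x i = ∑ j ∈ Finset.univ.erase i, (M j i : ℂ) * x j := by
    rw [Finset.sum_erase_eq_sub (Finset.mem_univ i), heig]; ring
  have hnorm : ‖z - (M i i : ℂ)‖ * (c * v i) ≤ ∑ j ∈ Finset.univ.erase i, M j i * (c * v j) := by
    rw [← hxi, ← norm_mul, hsplit]
    refine (norm_sum_le _ _).trans (Finset.sum_le_sum ?_)
    intro j hj
    rw [norm_mul, Complex.norm_real, Real.norm_eq_abs,
      abs_of_nonneg (hM j i (Finset.ne_of_mem_erase hj))]
    exact mul_le_mul_of_nonneg_left (hub j) (hM j i (Finset.ne_of_mem_erase hj))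
  have hsum : ∑ j ∈ Finset.univ.erase i, M j i * (c * v j)
      = c * ((v ᵥ* M) i - v i * M i i) := by
    have : (v ᵥ* M) i = ∑ j, v j * M j i := rfl
    rw [this, ← Finset.sum_erase_add Finset.univ _ (Finset.mem_univ i), add_sub_cancel_right,
      Finset.mul_sum]
    exact Finset.sum_congr rfl fun j _ => by ring
  have hre : z.re ≤ M i i + ‖z - (M i i : ℂ)‖ := by
    have h1 : (z - (M i i : ℂ)).re ≤ ‖z - (M i i : ℂ)‖ := Complex.re_le_norm _
    simp only [Complex.sub_re, Complex.ofReal_re] at h1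
    linarith
  have hbound : ‖z - (M i i : ℂ)‖ * v i ≤ (v ᵥ* M) i - v i * M i i := by
    rw [hsum] at hnorm
    nlinarith [hcpos]
  have := hvM i
  nlinarith [hv i, norm_nonneg (z - (M i i : ℂ))]

lemma backward [NeZero d] (Am Ap : Matrix (Fin d) (Fin d) ℝ) (ℓ : Fin d)
    (hAm : Metzler Am)
    (v wm : Fin d → ℝ) (hv : ∀ i, 0 < v i) (hwm : ∀ i, 0 ≤ wm i)
    (hvA : ∀ j, (v ᵥ* Ap) j < 0) (hwm0 : 0 < wm 0) (hwmA : wm ᵥ* Am + Pi.single ℓ 1 = 0)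
    (M : Matrix (Fin d) (Fin d) ℝ) (h1 : ∀ i j, Am i j ≤ M i j) (h2 : ∀ i j, M i j ≤ Ap i j) :
    IsHurwitz M ∧
      ∃ w : Fin d → ℝ, (∀ i, 0 ≤ w i) ∧ 0 < w 0 ∧ w ᵥ* M + Pi.single ℓ 1 = 0 := by
  have hMz : Metzler M := fun i j h => le_trans (hAm i j h) (h1 i j)
  have hvM : ∀ j, (v ᵥ* M) j < 0 := by
    intro j
    refine lt_of_le_of_lt ?_ (hvA j)
    rw [vecMul_apply', vecMul_apply']
    exact Finset.sum_le_sum fun i _ => mul_le_mul_of_nonneg_left (h2 i j) (hv i).le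
  refine ⟨hurwitz_of_pos_left_vec M hMz v hv hvM, ?_⟩
  -- injectivity of u ↦ Mᵀ *ᵥ u
  have hkey : ∀ u : Fin d → ℝ, u ᵥ* M = 0 → u = 0 := by
    intro u hu
    have h0 : ∀ j, (u ᵥ* M) j = 0 := fun j => congrFun hu j
    have hle := nonpos_of_vecMul_nonneg M hMz v hv hvM u (fun j => (h0 j).ge)
    have hge := nonpos_of_vecMul_nonneg M hMz v hv hvM (-u) (fun j => by
      have : ((-u) ᵥ* M) j = -((u ᵥ* M) j) := by
        rw [Matrix.neg_vecMul]; rfl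
      rw [this, h0 j, neg_zero])
    funext j
    have := hge j
    simp only [Pi.neg_apply, neg_nonpos] at this
    exact le_antisymm (hle j) this
  have hinj : Function.Injective (Mᵀ.mulVecLin) := by
    rw [injective_iff_map_eq_zero]
    intro u hu
    apply hkey
    rw [← Matrix.mulVec_transpose]
    exact hu
  have hsurj : Function.Surjective (Mᵀ.mulVecLin) :=
    (LinearMap.injective_iff_surjective).mp hinj
  obtain ⟨w, hw⟩ := hsurj (-(Pi.single ℓ 1))
  rw [Matrix.mulVecLin_apply, Matrix.mulVec_transpose] at hw
  have hwM : w ᵥ* M + Pi.single ℓ 1 = 0 := by rw [hw]; simp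
  -- show w ≥ wm
  have hwmM : ∀ j, (wm ᵥ* Am) j ≤ (wm ᵥ* M) j := by
    intro j
    rw [vecMul_apply', vecMul_apply']
    exact Finset.sum_le_sum fun i _ => mul_le_mul_of_nonneg_left (h1 i j) (hwm i)
  have hu : ∀ j, 0 ≤ ((wm - w) ᵥ* M) j := by
    intro j
    have e1 : (w ᵥ* M) j = -((Pi.single ℓ 1 : Fin d → ℝ) j) := by
      have := congrFun hwM j
      simp only [Pi.add_apply, Pi.zero_apply] at this
      linarith
    have e2 : (wm ᵥ* Am) j = -((Pi.single ℓ 1 : Fin d → ℝ) j) := by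
      have := congrFun hwmA j
      simp only [Pi.add_apply, Pi.zero_apply] at this
      linarith
    have e3 : ((wm - w) ᵥ* M) j = (wm ᵥ* M) j - (w ᵥ* M) j := by
      rw [Matrix.sub_vecMul]; rfl
    rw [e3, e1]
    have := hwmM j
    rw [e2] at this
    linarith
  have hge := nonpos_of_vecMul_nonneg M hMz v hv hvM (wm - w) hu
  have hwge : ∀ i, wm i ≤ w i := fun i => by
    have := hge i
    simp only [Pi.sub_apply] at this
    linarith
  exact ⟨w, fun i => le_trans (hwm i) (hwge i), lt_of_lt_of_le hwm0 (hwge 0), hwM⟩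

lemma exists_pow_norm_bound [NeZero d] (A : Matrix (Fin d) (Fin d) ℝ)
    (hH : IsHurwitz A) (s : ℝ) (hs : 0 < s)
    (hroots : ∀ z : ℂ, (A.map (Complex.ofReal)).charpoly.IsRoot z → ‖z + s‖ < s) :
    ∃ t : ℝ, 0 < t ∧ t < s ∧ ∃ N₀ : ℕ, ∀ n ≥ N₀,
      ‖((A.map (Complex.ofReal)) + (s : ℂ) • 1) ^ n‖ ≤ t ^ n := by
  set Nc : Matrix (Fin d) (Fin d) ℂ := (A.map (Complex.ofReal)) + (s : ℂ) • 1 with hNc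
  haveI : Nonempty (Fin d) := Fin.pos_iff_nonempty.mp (Nat.pos_of_ne_zero (NeZero.ne d))
  haveI : FiniteDimensional ℂ (Matrix (Fin d) (Fin d) ℂ) := by infer_instance
  haveI : CompleteSpace (Matrix (Fin d) (Fin d) ℂ) := FiniteDimensional.complete ℂ _
  -- every element of the spectrum has norm < s
  have hspec : ∀ z ∈ spectrum ℂ Nc, ‖z‖ < s := by
    intro z hz
    rw [spectrum.mem_iff] at hz
    have hdet : (z • (1 : Matrix (Fin d) (Fin d) ℂ) - Nc).det = 0 := by
      by_contra hne
      exact hz (by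
        rw [Matrix.isUnit_iff_isUnit_det]
        have : algebraMap ℂ (Matrix (Fin d) (Fin d) ℂ) z - Nc
            = z • (1 : Matrix (Fin d) (Fin d) ℂ) - Nc := by
          rw [Algebra.algebraMap_eq_smul_one]
        rw [this]
        exact isUnit_iff_ne_zero.mpr hne)
    have hroot : (A.map (Complex.ofReal)).charpoly.IsRoot (z - s) := by
      rw [Polynomial.IsRoot, charpoly_eval, ← hdet]
      congr 1
      ext i j
      simp only [hNc, Matrix.sub_apply, Matrix.add_apply, Matrix.smul_apply, Matrix.one_apply,
        smul_eq_mul]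
      split_ifs <;> ring
    have := hroots (z - s) hroot
    simpa using this
  have hsr : spectralRadius ℂ Nc < ENNReal.ofReal s := by
    have h1 : ∀ z ∈ spectrum ℂ Nc, ‖z‖₊ < s.toNNReal := by
      intro z hz
      rw [← norm_toNNReal]
      exact (Real.toNNReal_lt_toNNReal_iff hs).mpr (hspec z hz)
    have := spectrum.spectralRadius_lt_of_forall_lt (a := Nc) h1
    rwa [ENNReal.ofReal]
  obtain ⟨t, ht0, hρt, hts⟩ := ENNReal.lt_iff_exists_real_btwn.mp hsr
  have htpos : 0 < t := ENNReal.ofReal_pos.mp (pos_of_gt hρt)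
  have htlt : t < s := by
    have := hts
    rwa [ENNReal.ofReal_lt_ofReal_iff hs] at this
  refine ⟨t, htpos, htlt, ?_⟩
  have hlim := spectrum.limsup_pow_nnnorm_pow_one_div_le_spectralRadius Nc
  have hev : ∀ᶠ n : ℕ in Filter.atTop,
      (‖Nc ^ n‖₊ : ENNReal) ^ (1 / (n : ℝ)) < ENNReal.ofReal t :=
    Filter.eventually_lt_of_limsup_lt (lt_of_le_of_lt hlim hρt)
  obtain ⟨N₀, hN₀⟩ := Filter.eventually_atTop.mp (hev.and (Filter.eventually_ge_atTop 1))
  refine ⟨N₀, fun n hn => ?_⟩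
  obtain ⟨h, hn1⟩ := hN₀ n hn
  have hnne : (n : ℝ) ≠ 0 := Nat.cast_ne_zero.mpr (by omega)
  have h2 : ((‖Nc ^ n‖₊ : ENNReal) ^ (1 / (n : ℝ))) ^ (n : ℝ)
      < (ENNReal.ofReal t) ^ (n : ℝ) :=
    ENNReal.rpow_lt_rpow h (by positivity)
  have h3 : ((‖Nc ^ n‖₊ : ENNReal) ^ (1 / (n : ℝ))) ^ (n : ℝ)
      = (‖Nc ^ n‖₊ : ENNReal) := by
    rw [← ENNReal.rpow_mul, one_div, inv_mul_cancel₀ hnne, ENNReal.rpow_one]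
  rw [h3] at h2
  have h4 : (ENNReal.ofReal t) ^ (n : ℝ) = ENNReal.ofReal (t ^ n) := by
    rw [← Real.rpow_natCast t n, ENNReal.ofReal_rpow_of_pos htpos]
  rw [h4, ← enorm_eq_nnnorm, ← ofReal_norm] at h2
  exact le_of_lt ((ENNReal.ofReal_lt_ofReal_iff (by positivity)).mp h2)

lemma entry_le_linfty_norm (B : Matrix (Fin d) (Fin d) ℂ) (i j : Fin d) : ‖B i j‖ ≤ ‖B‖ := by
  rw [Matrix.linfty_opNorm_def]
  have h1 : ‖B i j‖₊ ≤ ∑ j', ‖B i j'‖₊ :=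
    Finset.single_le_sum (f := fun j' => ‖B i j'‖₊) (fun _ _ => zero_le) (Finset.mem_univ j)
  have h2 : (∑ j', ‖B i j'‖₊) ≤ Finset.univ.sup (fun i => ∑ j', ‖B i j'‖₊) :=
    Finset.le_sup (f := fun i => ∑ j', ‖B i j'‖₊) (Finset.mem_univ i)
  exact_mod_cast le_trans h1 h2

lemma exists_pos_left_vec [NeZero d] (A : Matrix (Fin d) (Fin d) ℝ) (hA : Metzler A)
    (hH : IsHurwitz A) : ∃ v : Fin d → ℝ, (∀ i, 0 < v i) ∧ ∀ j, (v ᵥ* A) j < 0 := by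
  haveI : Nonempty (Fin d) := Fin.pos_iff_nonempty.mp (Nat.pos_of_ne_zero (NeZero.ne d))
  -- choose the shift s
  have hfin : {z : ℂ | (A.map Complex.ofReal).charpoly.IsRoot z}.Finite :=
    Polynomial.finite_setOf_isRoot (Matrix.charpoly_monic _).ne_zero
  set g : ℂ → ℝ := fun z => Complex.normSq z / (2 * (-z.re)) with hg
  set F : Finset ℝ :=
    insert 1 ((hfin.toFinset.image g) ∪ (Finset.univ.image (fun i => -A i i))) with hF
  have hFne : F.Nonempty := ⟨1, by simp [hF]⟩
  set s : ℝ := F.max' hFne + 1 with hsdef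
  have hs : 0 < s := by
    have : (1:ℝ) ≤ F.max' hFne := Finset.le_max' _ 1 (by simp [hF])
    linarith
  have hsd : ∀ i, 0 ≤ A i i + s := by
    intro i
    have : -A i i ≤ F.max' hFne := Finset.le_max' _ _ (by simp [hF])
    linarith
  have hroots : ∀ z : ℂ, (A.map Complex.ofReal).charpoly.IsRoot z → ‖z + s‖ < s := by
    intro z hz
    have hre : z.re < 0 := hH z hz
    have hgz : g z < s := by
      have : g z ≤ F.max' hFne := Finset.le_max' _ _ (by
        simp only [hF, Finset.mem_insert, Finset.mem_union, Finset.mem_image,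
          Set.Finite.mem_toFinset]
        exact Or.inr (Or.inl ⟨z, hz, rfl⟩))
      linarith
    have hden : 0 < 2 * (-z.re) := by linarith
    have hlt : Complex.normSq z < s * (2 * (-z.re)) := by
      rw [hg] at hgz
      exact (div_lt_iff₀ hden).mp hgz
    have hsq : ‖z + (s:ℂ)‖ ^ 2 < s ^ 2 := by
      have e1 : ‖z + (s:ℂ)‖ ^ 2 = Complex.normSq (z + s) := by
        rw [Complex.sq_norm]
      have e2 : Complex.normSq (z + s) = Complex.normSq z + 2 * s * z.re + s ^ 2 := by
        simp only [Complex.normSq_apply, Complex.add_re, Complex.add_im, Complex.ofReal_re,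
          Complex.ofReal_im]
        ring
      rw [e1, e2]
      nlinarith
    exact lt_of_pow_lt_pow_left₀ 2 hs.le hsq
  -- the nonnegative shifted matrix
  set N : Matrix (Fin d) (Fin d) ℝ := A + s • 1 with hNdef
  have hNnn : ∀ i j, 0 ≤ N i j := by
    intro i j
    by_cases hij : i = j
    · subst hij
      simpa [hNdef, Matrix.add_apply, Matrix.smul_apply, Matrix.one_apply] using hsd i
    · simpa [hNdef, Matrix.add_apply, Matrix.smul_apply, Matrix.one_apply, hij] using hA i j hij
  obtain ⟨t, ht0, hts, N₀, hbd⟩ := exists_pow_norm_bound A hH s hs hroots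
  -- entrywise bound for powers of N
  have hmapN : (A.map (Complex.ofReal)) + (s : ℂ) • 1 = N.map (Complex.ofReal) := by
    ext i j
    simp only [Matrix.add_apply, Matrix.smul_apply, Matrix.map_apply, Matrix.one_apply, hNdef,
      smul_eq_mul]
    split_ifs <;> push_cast <;> ring
  have hmappow : ∀ n : ℕ, (N.map (Complex.ofReal)) ^ n = (N ^ n).map (Complex.ofReal) := by
    intro n
    have : N.map (Complex.ofReal) = (Complex.ofRealHom.mapMatrix) N := rfl
    rw [this, ← map_pow]
    rfl
  have hentry : ∀ n ≥ N₀, ∀ i j, (N ^ n) i j ≤ t ^ n := by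
    intro n hn i j
    have h1 := hbd n hn
    rw [hmapN, hmappow] at h1
    have h2 : ‖((N ^ n).map (Complex.ofReal)) i j‖ ≤ t ^ n :=
      le_trans (entry_le_linfty_norm _ i j) h1
    rw [Matrix.map_apply, Complex.norm_real, Real.norm_eq_abs] at h2
    exact (abs_le.mp h2).2
  -- entries of powers are nonnegative
  have hNk : ∀ k : ℕ, ∀ i j, 0 ≤ (N ^ k) i j := by
    intro k
    induction k with
    | zero => intro i j; by_cases h : i = j <;> simp [Matrix.one_apply, h]
    | succ k ih =>
      intro i j
      rw [pow_succ, Matrix.mul_apply]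
      exact Finset.sum_nonneg fun m _ => mul_nonneg (ih i m) (hNnn m j)
  set c : ℕ → Fin d → ℝ := fun k => (fun _ => (1:ℝ)) ᵥ* (N ^ k) with hc
  have hck : ∀ k i, c k i = ∑ j, (N ^ k) j i := by
    intro k i
    rw [hc]
    simp [vecMul_apply']
  have hcnn : ∀ k i, 0 ≤ c k i := fun k i => by
    rw [hck]; exact Finset.sum_nonneg fun j _ => hNk k j i
  have hc0 : ∀ i, c 0 i = 1 := by
    intro i
    rw [hck]
    simp [Matrix.one_apply]
  have hcb : ∀ k ≥ N₀, ∀ i, c k i ≤ d * t ^ k := by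
    intro k hk i
    rw [hck]
    calc ∑ j, (N ^ k) j i ≤ ∑ _j : Fin d, t ^ k :=
      Finset.sum_le_sum fun j _ => hentry k hk j i
    _ = d * t ^ k := by simp [Finset.sum_const, mul_comm]
  have hcsucc : ∀ k i, c (k+1) i = ∑ m, c k m * N m i := by
    intro k i
    rw [hc]
    show ((fun _ => (1:ℝ)) ᵥ* N ^ (k+1)) i = _
    rw [pow_succ, ← Matrix.vecMul_vecMul, vecMul_apply']
  -- summability
  set a : ℕ → Fin d → ℝ := fun k i => (s⁻¹) ^ (k+1) * c k i with ha
  have hann : ∀ k i, 0 ≤ a k i := fun k i => by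
    rw [ha]
    exact mul_nonneg (by positivity) (hcnn k i)
  have hsummable : ∀ i, Summable fun k => a k i := by
    intro i
    rw [← summable_nat_add_iff N₀]
    have hgeom : Summable fun k : ℕ => (d * (s⁻¹) ^ (N₀+1) * t ^ N₀) * (t/s) ^ k := by
      refine Summable.mul_left _ (summable_geometric_of_lt_one (by positivity) ?_)
      rw [div_lt_one hs]
      exact hts
    refine Summable.of_nonneg_of_le (fun k => hann _ i) (fun k => ?_) hgeom
    rw [ha]
    have h1 : c (k + N₀) i ≤ d * t ^ (k + N₀) := hcb (k + N₀) (by omega) i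
    have h2 : (0:ℝ) ≤ (s⁻¹) ^ (k + N₀ + 1) := by positivity
    calc (s⁻¹) ^ (k + N₀ + 1) * c (k + N₀) i ≤ (s⁻¹) ^ (k + N₀ + 1) * (d * t ^ (k + N₀)) :=
      mul_le_mul_of_nonneg_left h1 h2
    _ = (d * (s⁻¹) ^ (N₀+1) * t ^ N₀) * (t/s) ^ k := by
      rw [div_pow, pow_add, pow_add, pow_add]
      rw [div_eq_mul_inv, ← inv_pow]
      ring
  set v : Fin d → ℝ := fun i => ∑' k, a k i with hv
  have hvpos : ∀ i, 0 < v i := by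
    intro i
    have h1 : a 0 i ≤ v i := Summable.le_tsum (hsummable i) 0 (fun k _ => hann k i)
    have h2 : a 0 i = s⁻¹ := by rw [ha]; simp [hc0 i]
    rw [h2] at h1
    have : 0 < s⁻¹ := by positivity
    linarith
  -- the key identity
  have hkey : ∀ j, (v ᵥ* N) j = s * v j - 1 := by
    intro j
    have e1 : (v ᵥ* N) j = ∑ i, (∑' k, a k i) * N i j := by rw [vecMul_apply']
    have e2 : ∀ i, (∑' k, a k i) * N i j = ∑' k, a k i * N i j :=
      fun i => ((hsummable i).tsum_mul_right (N i j)).symm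
    have e3 : (v ᵥ* N) j = ∑' k, ∑ i, a k i * N i j := by
      rw [e1]
      simp_rw [e2]
      exact (Summable.tsum_finsetSum (fun i _ => (hsummable i).mul_right _)).symm
    have e5 : ∀ k, ∑ i, a k i * N i j = s * a (k+1) j := by
      intro k
      have l1 : ∑ i, a k i * N i j = (s⁻¹) ^ (k+1) * ∑ i, c k i * N i j := by
        rw [Finset.mul_sum]
        refine Finset.sum_congr rfl fun i _ => ?_
        show (s⁻¹) ^ (k+1) * c k i * N i j = (s⁻¹) ^ (k+1) * (c k i * N i j)
        ring
      rw [l1, ← hcsucc k j]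
      show (s⁻¹) ^ (k+1) * c (k+1) j = s * ((s⁻¹) ^ (k+1+1) * c (k+1) j)
      have hss : s * s⁻¹ = 1 := mul_inv_cancel₀ hs.ne'
      rw [pow_succ]
      linear_combination (-(s⁻¹ ^ (k+1)) * c (k+1) j) * hss
    have hsum2 : Summable (fun k => s * a (k+1) j) :=
      (((summable_nat_add_iff 1).mpr (hsummable j)).mul_left s)
    have e6 : (v ᵥ* N) j = ∑' k, s * a (k+1) j := by rw [e3]; exact tsum_congr e5
    have e7 : s * v j = ∑' k, s * a k j := ((hsummable j).tsum_mul_left s).symm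
    have e8 : ∑' k, s * a k j = s * a 0 j + ∑' k, s * a (k+1) j := by
      exact Summable.tsum_eq_zero_add ((hsummable j).mul_left s)
    have e9 : s * a 0 j = 1 := by
      rw [ha]
      simp [hc0 j]
      field_simp
    rw [e6]
    rw [e7, e8, e9]
    ring
  refine ⟨v, hvpos, fun j => ?_⟩
  have hAe : ∀ i, A i j = N i j - (if i = j then s else 0) := by
    intro i
    rw [hNdef]
    simp only [Matrix.add_apply, Matrix.smul_apply, Matrix.one_apply, smul_eq_mul]
    split_ifs <;> ring
  have hfinal : (v ᵥ* A) j = (v ᵥ* N) j - s * v j := by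
    rw [vecMul_apply', vecMul_apply']
    simp_rw [hAe, mul_sub]
    rw [Finset.sum_sub_distrib]
    congr 1
    rw [Finset.sum_congr rfl (fun i _ => by rw [mul_ite, mul_zero])]
    rw [Finset.sum_ite_eq' Finset.univ j (fun i => v i * s)]
    simp [mul_comm]
  rw [hfinal, hkey j]
  linarith

end Auxiliary

theorem robust_ergodicity_iff [NeZero d] (Am Ap : Matrix (Fin d) (Fin d) ℝ) (ℓ : Fin d)
    (hAm : Metzler Am) (hAp : Metzler Ap) (hle : ∀ i j, Am i j ≤ Ap i j) :
    (∀ M : Matrix (Fin d) (Fin d) ℝ,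
        (∀ i j, Am i j ≤ M i j) → (∀ i j, M i j ≤ Ap i j) →
        IsHurwitz M ∧
          ∃ w : Fin d → ℝ, (∀ i, 0 ≤ w i) ∧ 0 < w 0 ∧ w ᵥ* M + Pi.single ℓ 1 = 0)
    ↔ (∃ vp wm : Fin d → ℝ, (∀ i, 0 < vp i) ∧ (∀ i, 0 ≤ wm i) ∧
        (∀ j, (vp ᵥ* Ap) j < 0) ∧ 0 < wm 0 ∧ wm ᵥ* Am + Pi.single ℓ 1 = 0) := by
  constructor
  · intro h
    obtain ⟨hHp, -⟩ := h Ap hle (fun i j => le_refl _)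
    obtain ⟨-, w, hw1, hw2, hw3⟩ := h Am (fun i j => le_refl _) hle
    obtain ⟨v, hv, hvA⟩ := exists_pos_left_vec Ap hAp hHp
    exact ⟨v, w, hv, hw1, hvA, hw2, hw3⟩
  · rintro ⟨vp, wm, h1, h2, h3, h4, h5⟩ M hm1 hm2
    exact backward Am Ap ℓ hAm vp wm h1 h2 h3 h4 h5 M hm1 hm2
end

section
/- Let M be a Metzler matrix and i, j ∈ {1,…,d}. Then the row vector [e_jᵀe_i, e_jᵀMe_i, …, e_jᵀM^{d−1}e_i] is nonzero (i.e., e_jᵀM^k e_i ≠ 0 for some 0 ≤ k ≤ d−1) if and only if there is a directed path from node i to node j (or i = j) in the directed graph G_M on vertices {1,…,d} with an edge from m to n whenever m ≠ n and e_nᵀMe_m ≠ 0. -/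
open Matrix

variable {d : ℕ}

section Aux

private lemma binom_entry (M : Matrix (Fin d) (Fin d) ℝ) (c : ℝ) (k : ℕ) (j i : Fin d) :
    ((M + c • 1) ^ k) j i
      = ∑ m ∈ Finset.range (k + 1), (c ^ (k - m) * (k.choose m)) * ((M ^ m) j i) := by
  have hcomm : Commute M (c • (1 : Matrix (Fin d) (Fin d) ℝ)) := (Commute.one_right M).smul_right c
  rw [hcomm.add_pow]
  simp only [Matrix.sum_apply, smul_pow, one_pow, mul_smul_comm, mul_one, Matrix.smul_apply,
    ← nsmul_eq_mul', smul_eq_mul]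
  refine Finset.sum_congr rfl fun m _ => ?_
  rw [smul_mul_assoc, nsmul_eq_mul]

private lemma walk_to_path (M : Matrix (Fin d) (Fin d) ℝ) (i : Fin d) :
    ∀ k (j : Fin d), (M ^ k) j i ≠ 0 → Relation.ReflTransGen (edgeRel M) i j := by
  intro k
  induction k with
  | zero =>
    intro j h
    rw [pow_zero, Matrix.one_apply] at h
    rcases eq_or_ne j i with rfl | hne
    · exact Relation.ReflTransGen.refl
    · simp [hne] at h
  | succ k ih =>
    intro j h
    rw [pow_succ', Matrix.mul_apply] at h
    obtain ⟨m, -, hm⟩ := Finset.exists_ne_zero_of_sum_ne_zero h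
    have h1 : M j m ≠ 0 := left_ne_zero_of_mul hm
    have h2 : (M ^ k) m i ≠ 0 := right_ne_zero_of_mul hm
    rcases eq_or_ne m j with rfl | hmj
    · exact ih _ h2
    · exact (ih _ h2).tail ⟨hmj, h1⟩

private lemma pow_entry_nonneg {N : Matrix (Fin d) (Fin d) ℝ} (hN : ∀ a b, 0 ≤ N a b) :
    ∀ k (a b : Fin d), 0 ≤ (N ^ k) a b := by
  intro k
  induction k with
  | zero =>
    intro a b
    rw [pow_zero, Matrix.one_apply]
    split <;> norm_num
  | succ k ih =>
    intro a b
    rw [pow_succ', Matrix.mul_apply]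
    exact Finset.sum_nonneg fun m _ => mul_nonneg (hN a m) (ih m b)

private lemma pow_entry_pos_succ {N : Matrix (Fin d) (Fin d) ℝ} (hN : ∀ a b, 0 ≤ N a b)
    {k : ℕ} {v m i : Fin d} (hvm : 0 < N v m) (h : 0 < (N ^ k) m i) :
    0 < (N ^ (k + 1)) v i := by
  rw [pow_succ', Matrix.mul_apply]
  calc 0 < N v m * (N ^ k) m i := mul_pos hvm h
  _ ≤ ∑ x, N v x * (N ^ k) x i :=
      Finset.single_le_sum
        (fun x _ => mul_nonneg (hN v x) (pow_entry_nonneg hN k x i)) (Finset.mem_univ m)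

private lemma exists_pow_pos {N : Matrix (Fin d) (Fin d) ℝ} (hN : ∀ a b, 0 ≤ N a b)
    (hdiag : ∀ v, 0 < N v v) {i j : Fin d} (h : Relation.TransGen (edgeRel N) i j) :
    0 < (N ^ (d - 1)) j i := by
  classical
  set g : ℕ → Finset (Fin d) := fun k => Finset.univ.filter (fun v => 0 < (N ^ k) v i) with hg
  have hmono : ∀ k, g k ⊆ g (k + 1) := by
    intro k v hv
    simp only [hg, Finset.mem_filter, Finset.mem_univ, true_and] at hv ⊢
    exact pow_entry_pos_succ hN (hdiag v) hv
  have hmono' : ∀ k m, k ≤ m → g k ⊆ g m := by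
    intro k m hkm
    induction m, hkm using Nat.le_induction with
    | base => exact Finset.Subset.refl _
    | succ m hm ih => exact ih.trans (hmono m)
  have hstable : ∀ k, g k = g (k + 1) → g (k + 1) = g (k + 2) := by
    intro k hk
    refine Finset.Subset.antisymm (hmono _) ?_
    intro v hv
    simp only [hg, Finset.mem_filter, Finset.mem_univ, true_and] at hv ⊢
    rw [pow_succ', Matrix.mul_apply] at hv
    obtain ⟨m, -, hm⟩ := Finset.exists_ne_zero_of_sum_ne_zero hv.ne'
    have h1 : 0 < N v m := lt_of_le_of_ne (hN v m) (Ne.symm (left_ne_zero_of_mul hm))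
    have h2 : 0 < (N ^ (k + 1)) m i :=
      lt_of_le_of_ne (pow_entry_nonneg hN _ _ _) (Ne.symm (right_ne_zero_of_mul hm))
    have hmem : m ∈ g k := by
      rw [hk]
      simp only [hg, Finset.mem_filter, Finset.mem_univ, true_and]
      exact h2
    simp only [hg, Finset.mem_filter, Finset.mem_univ, true_and] at hmem
    exact pow_entry_pos_succ hN h1 hmem
  have hprop : ∀ k, g k = g (k + 1) → ∀ m, k ≤ m → g m = g k := by
    intro k hk
    have hconst : ∀ m, k ≤ m → g m = g (m + 1) := by
      intro m hm
      induction m, hm using Nat.le_induction with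
      | base => exact hk
      | succ m hm ih => exact hstable m ih
    intro m hm
    induction m, hm using Nat.le_induction with
    | base => rfl
    | succ m hm ih => rw [← hconst m hm]; exact ih
  have key : ∀ k, (k + 1 ≤ (g k).card) ∨ (∀ m, k ≤ m → g m = g k) := by
    intro k
    induction k with
    | zero =>
      left
      have hi : i ∈ g 0 := by
        simp only [hg, Finset.mem_filter, Finset.mem_univ, true_and, pow_zero,
          Matrix.one_apply_eq]
        norm_num
      exact Finset.card_pos.mpr ⟨i, hi⟩
    | succ k ih =>
      rcases ih with hcard | hstab
      · by_cases heq : g k = g (k + 1)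
        · right
          intro m hm
          rw [hprop k heq m (le_trans (Nat.le_succ k) hm), hprop k heq (k + 1) (Nat.le_succ k)]
        · left
          have hss : g k ⊂ g (k + 1) := (Finset.ssubset_iff_subset_ne).mpr ⟨hmono k, heq⟩
          have := Finset.card_lt_card hss
          omega
      · right
        intro m hm
        rw [hstab m (le_trans (Nat.le_succ k) hm), hstab (k + 1) (Nat.le_succ k)]
  have hd : 0 < d := i.pos
  have hsub : ∀ k, g k ⊆ g (d - 1) := by
    rcases key (d - 1) with hcard | hstab
    · have hle : (g (d - 1)).card ≤ d := by
        simpa using Finset.card_le_univ (g (d - 1))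
      have hdc : (g (d - 1)).card = Fintype.card (Fin d) := by simp; omega
      have huniv : g (d - 1) = Finset.univ := Finset.eq_univ_of_card _ hdc
      intro k
      rw [huniv]
      exact fun v _ => Finset.mem_univ v
    · intro k
      rcases le_or_gt k (d - 1) with hle | hlt
      · exact hmono' k (d - 1) hle
      · rw [hstab k hlt.le]
  have hex : ∃ k, 0 < (N ^ k) j i := by
    induction h with
    | single hb =>
      exact ⟨1, by rw [pow_one]; exact lt_of_le_of_ne (hN _ _) (Ne.symm hb.2)⟩
    | tail hbc e ih =>
      obtain ⟨k, hk⟩ := ih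
      exact ⟨k + 1, pow_entry_pos_succ hN (lt_of_le_of_ne (hN _ _) (Ne.symm e.2)) hk⟩
  obtain ⟨k, hk⟩ := hex
  have hj : j ∈ g k := by
    simp only [hg, Finset.mem_filter, Finset.mem_univ, true_and]
    exact hk
  have := hsub k hj
  simpa only [hg, Finset.mem_filter, Finset.mem_univ, true_and] using this

end Aux

theorem output_controllability_iff_path (M : Matrix (Fin d) (Fin d) ℝ)
    (hM : Metzler M) (i j : Fin d) :
    (∃ k, k < d ∧ (M ^ k) j i ≠ 0) ↔
      (i = j ∨ Relation.TransGen (edgeRel M) i j) := by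
  constructor
  · rintro ⟨k, -, hk⟩
    exact (Relation.reflTransGen_iff_eq_or_transGen.mp (walk_to_path M i k j hk)).imp Eq.symm id
  · intro h
    have hd : 0 < d := i.pos
    rcases h with rfl | h
    · exact ⟨0, hd, by simp [Matrix.one_apply]⟩
    · set c : ℝ := 1 + ∑ v, |M v v| with hc
      set N : Matrix (Fin d) (Fin d) ℝ := M + c • 1 with hNdef
      have hsum : ∀ a : Fin d, |M a a| ≤ ∑ v, |M v v| :=
        fun a => Finset.single_le_sum (f := fun v => |M v v|) (fun v _ => abs_nonneg _) (Finset.mem_univ a)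
      have hdiag : ∀ v, 0 < N v v := by
        intro v
        have hNv : N v v = M v v + c := by
          simp [hNdef, Matrix.add_apply, Matrix.smul_apply, Matrix.one_apply]
        have := neg_abs_le (M v v)
        have := hsum v
        rw [hNv, hc]; linarith
      have hoff : ∀ a b : Fin d, a ≠ b → N a b = M a b := by
        intro a b hab
        simp [hNdef, Matrix.add_apply, Matrix.smul_apply, Matrix.one_apply, hab]
      have hNnonneg : ∀ a b, 0 ≤ N a b := by
        intro a b
        rcases eq_or_ne a b with rfl | hab
        · exact (hdiag a).le
        · rw [hoff a b hab]; exact hM a b hab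
      have hedge : ∀ a b, edgeRel M a b → edgeRel N a b := by
        rintro a b ⟨h1, h2⟩
        exact ⟨h1, by rw [hoff b a (Ne.symm h1)]; exact h2⟩
      have hT : Relation.TransGen (edgeRel N) i j := Relation.TransGen.mono hedge i j h
      have hpos := exists_pow_pos hNnonneg hdiag hT
      by_contra hcon
      push_neg at hcon
      have hzero : (N ^ (d - 1)) j i = 0 := by
        rw [hNdef, binom_entry]
        refine Finset.sum_eq_zero fun m hm => ?_
        rw [Finset.mem_range] at hm
        rw [hcon m (by omega), mul_zero]
      exact absurd hzero hpos.ne'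
end

section
/- Let M be a Metzler Hurwitz stable matrix and i ≠ j. Then e_jᵀM⁻¹e_i ≠ 0 if and only if there is a directed path from node i to node j in the graph G_M (vertices {1,…,d}, edge (m,n) iff m ≠ n and e_nᵀMe_m ≠ 0). Moreover in that case e_jᵀM⁻¹e_i < 0. -/
open Matrix

variable {d : ℕ}

open Polynomial Filter
open scoped ENNReal NNReal Topology

attribute [local instance] Matrix.linftyOpNormedRing Matrix.linftyOpNormedAlgebra

lemma aux_mem_spectrum_iff_isRoot {n : ℕ} (A : Matrix (Fin n) (Fin n) ℂ) (z : ℂ) :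
    z ∈ spectrum ℂ A ↔ A.charpoly.IsRoot z := by
  rw [spectrum.mem_iff, Polynomial.IsRoot]
  have h1 : A.charpoly.eval z = (Matrix.scalar (Fin n) z - A).det := by
    rw [Matrix.charpoly, _root_.eval_det, Matrix.matPolyEquiv_charmatrix]
    simp
  have h2 : (algebraMap ℂ (Matrix (Fin n) (Fin n) ℂ)) z - A = Matrix.scalar (Fin n) z - A := by
    congr 1
  rw [h2, h1]
  constructor
  · intro h
    by_contra hd
    exact h ((Matrix.isUnit_iff_isUnit_det _).mpr (isUnit_iff_ne_zero.mpr hd))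
  · intro h hu
    exact absurd ((Matrix.isUnit_iff_isUnit_det _).mp hu) (by simpa [Matrix.scalar] using h)

lemma aux_pow_entry_nonneg {B : Matrix (Fin d) (Fin d) ℝ} (hB : ∀ m n, 0 ≤ B m n) :
    ∀ (k : ℕ) (m n : Fin d), 0 ≤ (B ^ k) m n := by
  intro k
  induction k with
  | zero => intro m n; by_cases h : m = n <;> simp [pow_zero, Matrix.one_apply, h]
  | succ k ih =>
    intro m n
    rw [pow_succ, Matrix.mul_apply]
    exact Finset.sum_nonneg fun c _ => mul_nonneg (ih m c) (hB c n)

lemma aux_transGen_of_pow_ne_zero {M B : Matrix (Fin d) (Fin d) ℝ}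
    (hBM : ∀ m n : Fin d, m ≠ n → B n m ≠ 0 → M n m ≠ 0) :
    ∀ (k : ℕ) (i j : Fin d), i ≠ j → (B ^ k) j i ≠ 0 → Relation.TransGen (edgeRel M) i j := by
  intro k
  induction k with
  | zero => intro i j hij h; rw [pow_zero, Matrix.one_apply_ne (Ne.symm hij)] at h; exact absurd rfl h
  | succ k ih =>
    intro i j hij h
    rw [pow_succ, Matrix.mul_apply] at h
    obtain ⟨m, -, hm⟩ := Finset.exists_ne_zero_of_sum_ne_zero h
    have h1 : (B ^ k) j m ≠ 0 := fun h0 => hm (by rw [h0, zero_mul])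
    have h2 : B m i ≠ 0 := fun h0 => hm (by rw [h0, mul_zero])
    by_cases hmi : m = i
    · exact ih i j hij (hmi ▸ h1)
    · have hedge : edgeRel M i m := ⟨Ne.symm hmi, hBM i m (Ne.symm hmi) h2⟩
      by_cases hmj : m = j
      · exact Relation.TransGen.single (hmj ▸ hedge)
      · exact Relation.TransGen.head hedge (ih m j hmj h1)

lemma aux_exists_pow_pos_of_transGen {M B : Matrix (Fin d) (Fin d) ℝ}
    (hB : ∀ m n, 0 ≤ B m n)
    (hMB : ∀ m n : Fin d, m ≠ n → M n m ≠ 0 → 0 < B n m)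
    {i j : Fin d} (h : Relation.TransGen (edgeRel M) i j) :
    ∃ k : ℕ, 0 < (B ^ k) j i := by
  induction h with
  | single he =>
    exact ⟨1, by rw [pow_one]; exact hMB _ _ he.1 he.2⟩
  | @tail b c hab he ih =>
    obtain ⟨k, hk⟩ := ih
    refine ⟨k + 1, ?_⟩
    rw [pow_succ', Matrix.mul_apply]
    have hpos : 0 < B c b * (B ^ k) b i := mul_pos (hMB _ _ he.1 he.2) hk
    refine lt_of_lt_of_le hpos ?_
    refine Finset.single_le_sum (f := fun m => B c m * (B ^ k) m i) ?_ (Finset.mem_univ b)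
    intro m _
    exact mul_nonneg (hB c m) (aux_pow_entry_nonneg hB k m i)

lemma aux_entry_nnnorm_le {n : ℕ} (X : Matrix (Fin n) (Fin n) ℂ) (a b : Fin n) :
    ‖X a b‖₊ ≤ ‖X‖₊ := by
  rw [Matrix.linfty_opNNNorm_def]
  calc ‖X a b‖₊ ≤ ∑ c, ‖X a c‖₊ :=
        Finset.single_le_sum (f := fun c => ‖X a c‖₊) (fun c _ => zero_le) (Finset.mem_univ b)
    _ ≤ _ := Finset.le_sup (f := fun c => ∑ e, ‖X c e‖₊) (Finset.mem_univ a)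

lemma aux_exists_geom_bound {n : ℕ} (hn : 0 < n) (A : Matrix (Fin n) (Fin n) ℂ)
    (hspec : ∀ z ∈ spectrum ℂ A, ‖z‖₊ < 1) :
    ∃ t : ℝ≥0, t < 1 ∧ ∀ᶠ k in atTop, ‖A ^ k‖₊ ≤ t ^ k := by
  haveI : Nonempty (Fin n) := ⟨⟨0, hn⟩⟩
  haveI : CompleteSpace (Matrix (Fin n) (Fin n) ℂ) :=
    inferInstance
  haveI : Nontrivial (Matrix (Fin n) (Fin n) ℂ) :=
    (inferInstanceAs (Nontrivial (Fin n → Fin n → ℂ)))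
  have hρ : spectralRadius ℂ A < 1 := by
    have := spectrum.spectralRadius_lt_of_forall_lt A (r := 1) hspec
    simpa using this
  obtain ⟨c, hc1, hc2⟩ := exists_between hρ
  have hctop : c ≠ ⊤ := ne_top_of_lt hc2
  set t : ℝ≥0 := c.toNNReal with ht
  have hct : (t : ℝ≥0∞) = c := ENNReal.coe_toNNReal hctop
  have htlt : t < 1 := by
    rw [← ENNReal.coe_lt_one_iff, hct]; exact hc2
  refine ⟨t, htlt, ?_⟩
  have hT := spectrum.pow_nnnorm_pow_one_div_tendsto_nhds_spectralRadius A
  have hev : ∀ᶠ k : ℕ in atTop, (‖A ^ k‖₊ : ℝ≥0∞) ^ (1 / (k:ℝ)) < c :=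
    hT.eventually_lt_const hc1
  filter_upwards [hev, eventually_ge_atTop 1] with k hk hk1
  have hk0 : (k : ℝ) ≠ 0 := by positivity
  have h3 : ((‖A ^ k‖₊ : ℝ≥0∞) ^ (1 / (k:ℝ))) ^ (k : ℝ) < c ^ (k : ℝ) :=
    ENNReal.rpow_lt_rpow hk (by positivity)
  rw [← ENNReal.rpow_mul, one_div, inv_mul_cancel₀ hk0, ENNReal.rpow_one] at h3
  have h4 : (‖A ^ k‖₊ : ℝ≥0∞) ≤ (t : ℝ≥0∞) ^ (k : ℕ) := by
    rw [← ENNReal.rpow_natCast, hct]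
    exact h3.le
  rw [← ENNReal.coe_pow, ENNReal.coe_le_coe] at h4
  exact h4


theorem static_gain_iff_path (M : Matrix (Fin d) (Fin d) ℝ)
    (hM : Metzler M) (hH : IsHurwitz M) (i j : Fin d) (hij : i ≠ j) :
    (M⁻¹ j i ≠ 0 ↔ Relation.TransGen (edgeRel M) i j) ∧
    (Relation.TransGen (edgeRel M) i j → M⁻¹ j i < 0) := by
  have hd : 0 < d := i.pos
  have hMc : ∀ m n, (M.map Complex.ofReal) m n = (M m n : ℂ) := fun m n => rfl
  -- choose a suitable large positive real α
  obtain ⟨c1, hc1⟩ := Finset.exists_le ((Finset.univ : Finset (Fin d)).image fun k => |M k k|)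
  obtain ⟨c2, hc2⟩ :=
    Finset.exists_le ((M.map Complex.ofReal).charpoly.roots.toFinset.image
      fun w => ‖w‖ ^ 2 / (-(2 * w.re)))
  set α : ℝ := max c1 0 + max c2 0 + 1 with hα
  have hαpos : 0 < α := by
    have := le_max_right c1 0; have := le_max_right c2 0
    simp only [hα]; linarith
  have hαne : α ≠ 0 := ne_of_gt hαpos
  have hdiag : ∀ k, -α ≤ M k k := by
    intro k
    have h1 : |M k k| ≤ c1 :=
      hc1 _ (Finset.mem_image.mpr ⟨k, Finset.mem_univ k, rfl⟩)
    have h2 := le_max_left c1 0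
    have h3 := le_max_right c2 0
    have h4 := neg_abs_le (M k k)
    simp only [hα]; linarith
  have hp : (M.map Complex.ofReal).charpoly ≠ 0 :=
    ((M.map Complex.ofReal).charpoly_monic).ne_zero
  have hroots : ∀ w : ℂ, (M.map Complex.ofReal).charpoly.IsRoot w →
      ‖w‖ ^ 2 < α * (-(2 * w.re)) := by
    intro w hw
    have hre : w.re < 0 := hH w hw
    have hden : 0 < -(2 * w.re) := by linarith
    have hmem : w ∈ (M.map Complex.ofReal).charpoly.roots.toFinset :=
      Multiset.mem_toFinset.mpr (Polynomial.mem_roots'.mpr ⟨hp, hw⟩)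
    have h1 : ‖w‖ ^ 2 / (-(2 * w.re)) ≤ c2 :=
      hc2 _ (Finset.mem_image.mpr ⟨w, hmem, rfl⟩)
    have h2 := le_max_left c2 0
    have h3 := le_max_right c1 0
    have hlt : ‖w‖ ^ 2 / (-(2 * w.re)) < α := by simp only [hα]; linarith
    calc ‖w‖ ^ 2 = ‖w‖ ^ 2 / (-(2 * w.re)) * (-(2 * w.re)) :=
          (div_mul_cancel₀ _ (ne_of_gt hden)).symm
      _ < α * (-(2 * w.re)) := mul_lt_mul_of_pos_right hlt hden
  -- the nonnegative matrix B
  set B : Matrix (Fin d) (Fin d) ℝ := α⁻¹ • M + 1 with hB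
  have hBentry : ∀ m n, B m n = α⁻¹ * M m n + (if m = n then (1:ℝ) else 0) := by
    intro m n
    simp [hB, Matrix.add_apply, Matrix.smul_apply, Matrix.one_apply, smul_eq_mul]
  have hBoff : ∀ m n : Fin d, m ≠ n → B m n = α⁻¹ * M m n := by
    intro m n h; rw [hBentry, if_neg h, add_zero]
  have hBnn : ∀ m n, 0 ≤ B m n := by
    intro m n
    rcases eq_or_ne m n with rfl | h
    · rw [hBentry, if_pos rfl]
      have h1 := hdiag m
      have h2 : α⁻¹ * (-α) ≤ α⁻¹ * M m m :=
        mul_le_mul_of_nonneg_left h1 (by positivity)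
      have h3 : α⁻¹ * (-α) = -1 := by field_simp
      linarith
    · rw [hBoff m n h]
      exact mul_nonneg (by positivity) (hM m n h)
  -- spectrum of the complexification of B
  have hαC : (α:ℂ) ≠ 0 := by exact_mod_cast hαne
  have hBcMc : B.map Complex.ofReal = (α:ℂ)⁻¹ • (M.map Complex.ofReal) + 1 := by
    ext m n
    rcases eq_or_ne m n with rfl | h
    · rw [Matrix.map_apply, hBentry m m, if_pos rfl, Matrix.add_apply, Matrix.smul_apply,
        Matrix.one_apply_eq, Matrix.map_apply, smul_eq_mul]
      push_cast; ring
    · rw [Matrix.map_apply, hBentry m n, if_neg h, Matrix.add_apply, Matrix.smul_apply,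
        Matrix.one_apply_ne h, Matrix.map_apply, smul_eq_mul]
      push_cast; ring
  have hspec : ∀ z ∈ spectrum ℂ (B.map Complex.ofReal), ‖z‖₊ < 1 := by
    intro z hz
    set w : ℂ := α * (z - 1) with hw
    have hkey : (algebraMap ℂ (Matrix (Fin d) (Fin d) ℂ)) z - B.map Complex.ofReal
        = (α:ℂ)⁻¹ • ((algebraMap ℂ (Matrix (Fin d) (Fin d) ℂ)) w - M.map Complex.ofReal) := by
      rw [hBcMc, Algebra.algebraMap_eq_smul_one, Algebra.algebraMap_eq_smul_one]
      rw [smul_sub, smul_smul, hw]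
      rw [show (α:ℂ)⁻¹ * (α * (z - 1)) = z - 1 by field_simp]
      rw [sub_smul, one_smul]
      abel
    have hwspec : w ∈ spectrum ℂ (M.map Complex.ofReal) := by
      rw [spectrum.mem_iff] at hz ⊢
      intro hu
      apply hz
      rw [hkey]
      exact (isUnit_smul_iff (Units.mk0 ((α:ℂ)⁻¹) (inv_ne_zero hαC))
        ((algebraMap ℂ (Matrix (Fin d) (Fin d) ℂ)) w - M.map Complex.ofReal)).mpr hu
    have hw2 := hroots w ((aux_mem_spectrum_iff_isRoot _ w).mp hwspec)
    have hzw : z = 1 + w / α := by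
      rw [hw]; field_simp; ring
    have hnorm : ‖z‖ < 1 := by
      have hzre : z.re = 1 + w.re / α := by rw [hzw]; simp [Complex.div_ofReal_re]
      have hzim : z.im = w.im / α := by rw [hzw]; simp [Complex.div_ofReal_im]
      have hnsq : ‖z‖ ^ 2 = z.re ^ 2 + z.im ^ 2 := by
        rw [Complex.sq_norm, Complex.normSq_apply]; ring
      have hwsq : ‖w‖ ^ 2 = w.re ^ 2 + w.im ^ 2 := by
        rw [Complex.sq_norm, Complex.normSq_apply]; ring
      have hw2' : w.re ^ 2 + w.im ^ 2 < -(2 * α * w.re) := by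
        have hr : α * (-(2 * w.re)) = -(2 * α * w.re) := by ring
        rw [hwsq, hr] at hw2
        exact hw2
      have hsq : ‖z‖ ^ 2 < 1 := by
        have hexp : (1 + w.re / α) ^ 2 + (w.im / α) ^ 2
            = 1 + (2 * α * w.re + (w.re ^ 2 + w.im ^ 2)) / α ^ 2 := by
          field_simp
          ring
        have hnum : 2 * α * w.re + (w.re ^ 2 + w.im ^ 2) < 0 := by linarith
        have hfrac : (2 * α * w.re + (w.re ^ 2 + w.im ^ 2)) / α ^ 2 < 0 :=
          div_neg_of_neg_of_pos hnum (by positivity)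
        rw [hnsq, hzre, hzim, hexp]
        linarith
      nlinarith [norm_nonneg z]
    rw [← NNReal.coe_lt_coe]
    push_cast
    exact hnorm
  -- geometric decay of powers
  obtain ⟨t, htlt, hev⟩ := aux_exists_geom_bound hd (B.map Complex.ofReal) hspec
  have hmap : ∀ k : ℕ, (B.map Complex.ofReal) ^ k = (B ^ k).map Complex.ofReal := by
    intro k
    have h0 : ∀ X : Matrix (Fin d) (Fin d) ℝ,
        X.map Complex.ofReal = Complex.ofRealHom.mapMatrix X := fun X => rfl
    rw [h0, h0, ← map_pow]
  -- summability of entries of powers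
  have hsum : ∀ a b : Fin d, Summable (fun k : ℕ => (B ^ k) a b) := by
    intro a b
    apply Summable.of_norm_bounded_eventually_nat
      (summable_geometric_of_lt_one t.coe_nonneg (by exact_mod_cast htlt))
    filter_upwards [hev] with k hk
    have he : ‖(B ^ k) a b‖ = ‖((B.map Complex.ofReal) ^ k) a b‖ := by
      rw [hmap, Matrix.map_apply, Complex.norm_real]
    rw [he]
    calc ‖((B.map Complex.ofReal) ^ k) a b‖ ≤ ‖(B.map Complex.ofReal) ^ k‖ := by
          exact_mod_cast aux_entry_nnnorm_le _ a b
      _ ≤ (t:ℝ) ^ k := by exact_mod_cast hk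
  -- the candidate inverse
  set S : Matrix (Fin d) (Fin d) ℝ := Matrix.of (fun a b => ∑' k : ℕ, (B ^ k) a b) with hS
  have hSapp : ∀ a b, S a b = ∑' k : ℕ, (B ^ k) a b := fun a b => rfl
  have hMS : M * S = (-α) • 1 := by
    have hMB : M = α • B - α • 1 := by
      rw [hB, smul_add, smul_smul, mul_inv_cancel₀ hαne, one_smul]
      abel
    ext a b
    rw [Matrix.mul_apply, Matrix.smul_apply, smul_eq_mul]
    have hterm : ∀ m, M a m * S m b = ∑' k : ℕ, M a m * (B ^ k) m b := by
      intro m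
      rw [hSapp, ← tsum_mul_left]
    rw [Finset.sum_congr rfl fun m _ => hterm m]
    rw [← Summable.tsum_finsetSum (fun m _ => (hsum m b).mul_left (M a m))]
    have hMBk : ∀ k : ℕ, ∑ m, M a m * (B ^ k) m b
        = α * (B ^ (k+1)) a b - α * (B ^ k) a b := by
      intro k
      have h1 : ∑ m, M a m * (B ^ k) m b = (M * B ^ k) a b := (Matrix.mul_apply).symm
      rw [h1, hMB]
      rw [Matrix.sub_mul, Matrix.smul_mul, Matrix.smul_mul, Matrix.one_mul, ← pow_succ']
      rw [Matrix.sub_apply, Matrix.smul_apply, Matrix.smul_apply, smul_eq_mul, smul_eq_mul]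
    rw [tsum_congr hMBk]
    have hsum1 : Summable (fun k : ℕ => (B ^ (k+1)) a b) :=
      (summable_nat_add_iff (f := fun k : ℕ => (B ^ k) a b) 1).mpr (hsum a b)
    rw [Summable.tsum_sub (hsum1.mul_left α) ((hsum a b).mul_left α)]
    rw [tsum_mul_left, tsum_mul_left]
    have hshift : ∑' k : ℕ, (B ^ k) a b = (B ^ 0) a b + ∑' k : ℕ, (B ^ (k+1)) a b :=
      Summable.tsum_eq_zero_add (hsum a b)
    rw [hshift]
    rw [pow_zero]
    ring
  have hMinv : M⁻¹ = (-α)⁻¹ • S := by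
    apply Matrix.inv_eq_right_inv
    rw [Matrix.mul_smul, hMS, smul_smul, inv_mul_cancel₀ (by simpa using hαne), one_smul]
  have hMinv' : M⁻¹ j i = (-α)⁻¹ * S j i := by
    rw [hMinv, Matrix.smul_apply, smul_eq_mul]
  have hαinvneg : (-α)⁻¹ < 0 := inv_lt_zero.mpr (neg_neg_of_pos hαpos)
  have hSnn : 0 ≤ S j i := tsum_nonneg fun k => aux_pow_entry_nonneg hBnn k j i
  -- edge relation transfer
  have hBM : ∀ m n : Fin d, m ≠ n → B n m ≠ 0 → M n m ≠ 0 := by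
    intro m n h hBnm h0
    exact hBnm (by rw [hBoff n m (Ne.symm h), h0, mul_zero])
  have hMB' : ∀ m n : Fin d, m ≠ n → M n m ≠ 0 → 0 < B n m := by
    intro m n h h0
    rw [hBoff n m (Ne.symm h)]
    exact mul_pos (by positivity) (lt_of_le_of_ne (hM n m (Ne.symm h)) (Ne.symm h0))
  have fwd : M⁻¹ j i ≠ 0 → Relation.TransGen (edgeRel M) i j := by
    intro hne
    have hSne : S j i ≠ 0 := by
      intro h0
      exact hne (by rw [hMinv', h0, mul_zero])
    have hk : ∃ k : ℕ, (B ^ k) j i ≠ 0 := by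
      by_contra hall
      push_neg at hall
      exact hSne (by rw [hSapp]; simp [hall])
    obtain ⟨k, hk⟩ := hk
    exact aux_transGen_of_pow_ne_zero hBM k i j hij hk
  have bwd : Relation.TransGen (edgeRel M) i j → M⁻¹ j i < 0 := by
    intro hpath
    obtain ⟨k, hk⟩ := aux_exists_pow_pos_of_transGen hBnn hMB' hpath
    have hSpos : 0 < S j i := by
      rw [hSapp]
      exact Summable.tsum_pos (hsum j i) (fun m => aux_pow_entry_nonneg hBnn m j i) k hk
    rw [hMinv']
    exact mul_neg_of_neg_of_pos hαinvneg hSpos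
  exact ⟨⟨fwd, fun h => ne_of_lt (bwd h)⟩, bwd⟩
end

section
/- Let S be a d×d Metzler matrix with entries in {−1, 0, 1}. There exist matrices in the qualitative class Q(S) that are not Hurwitz stable if and only if there is no v ∈ ℝ^d_{>0} with vᵀS < 0, which by Farkas' lemma is equivalent to the existence of v₂, v₃ ∈ ℝ^d_{≥0} with ‖v₂ + v₃‖₁ = 1 and v₂ − S v₃ = 0. -/
open Matrix

variable {d : ℕ}

section SIFAuxSection

open Matrix Finset Relation Polynomial
open scoped Classical

namespace SIFAux

variable {d : ℕ}

/-- edge i → j iff the (i,j) entry of S is 1 -/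
def Edg (S : Matrix (Fin d) (Fin d) ℝ) (i j : Fin d) : Prop := i ≠ j ∧ S i j = 1

noncomputable def rs (S : Matrix (Fin d) (Fin d) ℝ) (T : Finset (Fin d)) (i : Fin d) : ℝ :=
  ∑ k ∈ T.erase i, S i k

def Cert (S : Matrix (Fin d) (Fin d) ℝ) : Prop :=
  ∃ (T : Finset (Fin d)) (lam : ℝ), (lam = 0 ∨ lam = 1) ∧ T.Nonempty ∧
    (∀ i ∉ T, ∀ k ∈ T, S i k = 0) ∧
    ∀ i ∈ T, (S i i = -1 ∧ 1 ≤ rs S T i) ∨ (S i i = 0 ∧ rs S T i = 0 ∧ lam = 0) ∨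
      (S i i = 0 ∧ 1 ≤ rs S T i ∧ lam = 1) ∨ (S i i = 1 ∧ lam = 1)

variable {S : Matrix (Fin d) (Fin d) ℝ}

lemma offdiag01 (hsgn : ∀ i j, S i j = -1 ∨ S i j = 0 ∨ S i j = 1)
    (hMz : ∀ i j, i ≠ j → 0 ≤ S i j) {i k : Fin d} (h : i ≠ k) :
    S i k = 0 ∨ S i k = 1 := by
  rcases hsgn i k with h1 | h1 | h1
  · have := hMz i k h; rw [h1] at this; linarith
  · exact Or.inl h1
  · exact Or.inr h1

lemma rs_eq_card (hsgn : ∀ i j, S i j = -1 ∨ S i j = 0 ∨ S i j = 1)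
    (hMz : ∀ i j, i ≠ j → 0 ≤ S i j) (T : Finset (Fin d)) (i : Fin d) :
    rs S T i = (((T.erase i).filter (fun k => S i k = 1)).card : ℝ) := by
  rw [rs, ← Finset.sum_filter_of_ne (p := fun k => S i k = 1)
    (fun k hk hne => ((offdiag01 hsgn hMz (fun he => (Finset.mem_erase.1 hk).1 he.symm)).resolve_left hne))]
  rw [Finset.sum_congr rfl (fun k hk => (Finset.mem_filter.1 hk).2), Finset.sum_const]
  simp

lemma rs_cases (hsgn : ∀ i j, S i j = -1 ∨ S i j = 0 ∨ S i j = 1)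
    (hMz : ∀ i j, i ≠ j → 0 ≤ S i j) (T : Finset (Fin d)) (i : Fin d) :
    rs S T i = 0 ∨ 1 ≤ rs S T i := by
  rw [rs_eq_card hsgn hMz]
  rcases Nat.eq_zero_or_pos ((T.erase i).filter (fun k => S i k = 1)).card with h | h
  · left; rw [h]; norm_num
  · right; exact_mod_cast h

lemma one_le_rs (hsgn : ∀ i j, S i j = -1 ∨ S i j = 0 ∨ S i j = 1)
    (hMz : ∀ i j, i ≠ j → 0 ≤ S i j) {T : Finset (Fin d)} {i k : Fin d}
    (hk : k ∈ T) (hki : k ≠ i) (h1 : S i k = 1) : 1 ≤ rs S T i := by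
  rw [rs_eq_card hsgn hMz]
  have : k ∈ (T.erase i).filter (fun k => S i k = 1) := by
    simp [Finset.mem_erase, hki, hk, h1]
  have := Finset.card_pos.2 ⟨k, this⟩
  exact_mod_cast this

lemma rs_witness (hsgn : ∀ i j, S i j = -1 ∨ S i j = 0 ∨ S i j = 1)
    (hMz : ∀ i j, i ≠ j → 0 ≤ S i j) {T : Finset (Fin d)} {i : Fin d}
    (h : 1 ≤ rs S T i) : ∃ k ∈ T, k ≠ i ∧ S i k = 1 := by
  rw [rs_eq_card hsgn hMz] at h
  have : 0 < ((T.erase i).filter (fun k => S i k = 1)).card := by exact_mod_cast lt_of_lt_of_le zero_lt_one h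
  obtain ⟨k, hk⟩ := Finset.card_pos.1 this
  rw [Finset.mem_filter, Finset.mem_erase] at hk
  exact ⟨k, hk.1.2, hk.1.1, hk.2⟩

noncomputable def anc (S : Matrix (Fin d) (Fin d) ℝ) (j : Fin d) : Finset (Fin d) :=
  Finset.univ.filter (fun i => ReflTransGen (Edg S) i j)

lemma mem_anc {i j : Fin d} : i ∈ anc S j ↔ ReflTransGen (Edg S) i j := by
  simp [anc]

lemma self_mem_anc (j : Fin d) : j ∈ anc S j := mem_anc.2 ReflTransGen.refl

lemma anc_closed (hsgn : ∀ i j, S i j = -1 ∨ S i j = 0 ∨ S i j = 1)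
    (hMz : ∀ i j, i ≠ j → 0 ≤ S i j) (j : Fin d) :
    ∀ i ∉ anc S j, ∀ k ∈ anc S j, S i k = 0 := by
  intro i hi k hk
  by_contra hne
  have hik : i ≠ k := fun he => hi (he ▸ hk)
  have h1 : S i k = 1 := (offdiag01 hsgn hMz hik).resolve_left hne
  exact hi (mem_anc.2 (ReflTransGen.head ⟨hik, h1⟩ (mem_anc.1 hk)))

lemma anc_head {i j : Fin d} (hi : i ∈ anc S j) (hij : i ≠ j) :
    ∃ k ∈ anc S j, k ≠ i ∧ S i k = 1 := by
  rcases (mem_anc.1 hi).cases_head with h | ⟨c, hc, hcj⟩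
  · exact absurd h hij
  · exact ⟨c, mem_anc.2 hcj, fun he => hc.1 he.symm, hc.2⟩

lemma anc_mono_of_noCycle (hnc : ∀ a, ¬ TransGen (Edg S) a a) {i j : Fin d}
    (he : Edg S i j) : (anc S i).card < (anc S j).card := by
  apply Finset.card_lt_card
  constructor
  · intro x hx
    exact mem_anc.2 ((mem_anc.1 hx).trans (ReflTransGen.single he))
  · intro hsub
    have hj : j ∈ anc S i := hsub (self_mem_anc j)
    exact hnc i (TransGen.head' he (mem_anc.1 hj))



section CertConstructions

lemma certA (hsgn : ∀ i j, S i j = -1 ∨ S i j = 0 ∨ S i j = 1)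
    (hMz : ∀ i j, i ≠ j → 0 ≤ S i j) (h : ∃ j, S j j = 1) : Cert S := by
  obtain ⟨j, hj⟩ := h
  refine ⟨anc S j, 1, Or.inr rfl, ⟨j, self_mem_anc j⟩, anc_closed hsgn hMz j, ?_⟩
  intro i hi
  by_cases hij : i = j
  · subst hij; exact Or.inr (Or.inr (Or.inr ⟨hj, rfl⟩))
  · obtain ⟨k, hk, hki, hk1⟩ := anc_head hi hij
    have hrs : 1 ≤ rs S (anc S j) i := one_le_rs hsgn hMz hk hki hk1
    rcases hsgn i i with h1 | h1 | h1
    · exact Or.inl ⟨h1, hrs⟩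
    · exact Or.inr (Or.inr (Or.inl ⟨h1, hrs, rfl⟩))
    · exact Or.inr (Or.inr (Or.inr ⟨h1, rfl⟩))

lemma certB (hsgn : ∀ i j, S i j = -1 ∨ S i j = 0 ∨ S i j = 1)
    (hMz : ∀ i j, i ≠ j → 0 ≤ S i j) (h : ∃ a, TransGen (Edg S) a a) : Cert S := by
  obtain ⟨a, ha⟩ := h
  refine ⟨anc S a, 1, Or.inr rfl, ⟨a, self_mem_anc a⟩, anc_closed hsgn hMz a, ?_⟩
  intro i hi
  have hrs : 1 ≤ rs S (anc S a) i := by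
    by_cases hia : i = a
    · subst hia
      obtain ⟨c, hc, hca⟩ := TransGen.head'_iff.1 ha
      exact one_le_rs hsgn hMz (mem_anc.2 hca) (fun he => hc.1 he.symm) hc.2
    · obtain ⟨k, hk, hki, hk1⟩ := anc_head hi hia
      exact one_le_rs hsgn hMz hk hki hk1
  rcases hsgn i i with h1 | h1 | h1
  · exact Or.inl ⟨h1, hrs⟩
  · exact Or.inr (Or.inr (Or.inl ⟨h1, hrs, rfl⟩))
  · exact Or.inr (Or.inr (Or.inr ⟨h1, rfl⟩))

lemma certC (hsgn : ∀ i j, S i j = -1 ∨ S i j = 0 ∨ S i j = 1)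
    (hMz : ∀ i j, i ≠ j → 0 ≤ S i j) (hno1 : ∀ i, S i i ≠ 1)
    (hnc : ∀ a, ¬ TransGen (Edg S) a a) (h0 : ∃ i, S i i = 0) : Cert S := by
  classical
  set Z : Finset (Fin d) := Finset.univ.filter (fun i => S i i = 0) with hZ
  have hZne : Z.Nonempty := by
    obtain ⟨i, hi⟩ := h0; exact ⟨i, by simp [hZ, hi]⟩
  obtain ⟨j, hjZ, hjmin⟩ := Finset.exists_min_image Z (fun i => (anc S i).card) hZne
  have hj0 : S j j = 0 := by simpa [hZ] using hjZ
  refine ⟨anc S j, 0, Or.inl rfl, ⟨j, self_mem_anc j⟩, anc_closed hsgn hMz j, ?_⟩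
  intro i hi
  by_cases hij : i = j
  · subst hij
    have hrs0 : rs S (anc S i) i = 0 := by
      rcases rs_cases hsgn hMz (anc S i) i with h | h
      · exact h
      · obtain ⟨k, hk, hki, hk1⟩ := rs_witness hsgn hMz h
        exact absurd (TransGen.head' ⟨fun he => hki he.symm, hk1⟩ (mem_anc.1 hk)) (hnc i)
    exact Or.inr (Or.inl ⟨hj0, hrs0, rfl⟩)
  · obtain ⟨k, hk, hki, hk1⟩ := anc_head hi hij
    have hrs : 1 ≤ rs S (anc S j) i := one_le_rs hsgn hMz hk hki hk1
    rcases hsgn i i with h1 | h1 | h1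
    · exact Or.inl ⟨h1, hrs⟩
    · -- i is a zero-diagonal strict ancestor of j : contradicts minimality
      exfalso
      have hiZ : i ∈ Z := by simp [hZ, h1]
      have htg : TransGen (Edg S) i j := by
        rcases (mem_anc.1 hi).cases_head with he | ⟨c, hc, hcj⟩
        · exact absurd he hij
        · exact TransGen.head' hc hcj
      have hlt : (anc S i).card < (anc S j).card := by
        apply Finset.card_lt_card
        constructor
        · intro x hx
          exact mem_anc.2 ((mem_anc.1 hx).trans htg.to_reflTransGen)
        · intro hsub
          have hji : j ∈ anc S i := hsub (self_mem_anc j)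
          exact hnc i (TransGen.trans_left htg (mem_anc.1 hji))
      exact absurd (hjmin i hiZ) (not_le.2 hlt)
    · exact absurd h1 (hno1 i)


lemma vecMul_apply' (v : Fin d → ℝ) (j : Fin d) : (v ᵥ* S) j = ∑ i, v i * S i j := by
  simp [Matrix.vecMul, dotProduct]

lemma good_of_nice (hsgn : ∀ i j, S i j = -1 ∨ S i j = 0 ∨ S i j = 1)
    (hMz : ∀ i j, i ≠ j → 0 ≤ S i j) (hdiag : ∀ i, S i i = -1)
    (hnc : ∀ a, ¬ TransGen (Edg S) a a) :
    ∃ v : Fin d → ℝ, (∀ i, 0 < v i) ∧ ∀ j, (v ᵥ* S) j < 0 := by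
  classical
  set v : Fin d → ℝ := fun i => ((d : ℝ) + 1) ^ ((anc S i).card) with hv
  have hbase : (1:ℝ) ≤ (d : ℝ) + 1 := by
    have : (0:ℝ) ≤ (d:ℝ) := Nat.cast_nonneg d
    linarith
  have hvpos : ∀ i, 0 < v i := fun i => pow_pos (by positivity) _
  refine ⟨v, hvpos, ?_⟩
  intro j
  rw [vecMul_apply', ← Finset.add_sum_erase _ _ (Finset.mem_univ j), hdiag j]
  have hcard1 : 1 ≤ (anc S j).card := Finset.card_pos.2 ⟨j, self_mem_anc j⟩
  set e : ℕ := (anc S j).card - 1 with he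
  have hee : (anc S j).card = e + 1 := (Nat.succ_pred_eq_of_pos hcard1).symm
  have hbound : ∀ i ∈ Finset.univ.erase j, v i * S i j ≤ ((d:ℝ)+1) ^ e := by
    intro i hi
    have hij : i ≠ j := (Finset.mem_erase.1 hi).1
    rcases offdiag01 hsgn hMz hij with h0 | h1
    · rw [h0, mul_zero]; positivity
    · rw [h1, mul_one]
      have hlt := anc_mono_of_noCycle hnc ⟨hij, h1⟩
      have : (anc S i).card ≤ e := by omega
      exact pow_le_pow_right₀ hbase this
  have hsum : ∑ i ∈ Finset.univ.erase j, v i * S i j ≤ (d:ℝ) * ((d:ℝ)+1) ^ e := by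
    calc ∑ i ∈ Finset.univ.erase j, v i * S i j
        ≤ (Finset.univ.erase j).card • (((d:ℝ)+1) ^ e) := Finset.sum_le_card_nsmul _ _ _ hbound
      _ = ((Finset.univ.erase j).card : ℝ) * ((d:ℝ)+1) ^ e := by rw [nsmul_eq_mul]
      _ ≤ (d:ℝ) * ((d:ℝ)+1) ^ e := by
          apply mul_le_mul_of_nonneg_right _ (by positivity)
          have : (Finset.univ.erase j).card ≤ d := by
            simpa using Finset.card_erase_le (s := (Finset.univ : Finset (Fin d))) (a := j)
          exact_mod_cast this
  have hvj : v j = ((d:ℝ)+1) ^ (e+1) := by rw [hv]; simp only [← hee]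
  have : (d:ℝ) * ((d:ℝ)+1) ^ e < v j := by
    rw [hvj, pow_succ, mul_comm (((d:ℝ)+1)^e)]
    apply mul_lt_mul_of_pos_right (by linarith) (by positivity)
  nlinarith [hsum, this]

lemma cert_of_not_good (hsgn : ∀ i j, S i j = -1 ∨ S i j = 0 ∨ S i j = 1)
    (hMz : ∀ i j, i ≠ j → 0 ≤ S i j)
    (h : ¬ ∃ v : Fin d → ℝ, (∀ i, 0 < v i) ∧ ∀ j, (v ᵥ* S) j < 0) : Cert S := by
  by_cases h1 : ∃ j, S j j = 1
  · exact certA hsgn hMz h1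
  by_cases h2 : ∃ a, TransGen (Edg S) a a
  · exact certB hsgn hMz h2
  by_cases h3 : ∃ i, S i i = 0
  · exact certC hsgn hMz (fun i hi => h1 ⟨i, hi⟩) (fun a ha => h2 ⟨a, ha⟩) h3
  · exfalso
    apply h
    apply good_of_nice hsgn hMz _ (fun a ha => h2 ⟨a, ha⟩)
    intro i
    rcases hsgn i i with hh | hh | hh
    · exact hh
    · exact absurd ⟨i, hh⟩ h3
    · exact absurd ⟨i, hh⟩ h1

end CertConstructions


section Spectral

lemma eval_charpoly_mat {R : Type*} [CommRing R] (A : Matrix (Fin d) (Fin d) R) (μ : R) :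
    A.charpoly.eval μ = (μ • (1 : Matrix (Fin d) (Fin d) R) - A).det := by
  rw [Matrix.charpoly, show Polynomial.eval μ = (Polynomial.evalRingHom μ : R[X] →+* R) from rfl,
    RingHom.map_det]
  congr 1
  ext i j
  by_cases h : i = j <;>
    simp [h, Matrix.charmatrix_apply, Matrix.one_apply, Matrix.diagonal_apply]

lemma sign_self {x : ℝ} (h : x = -1 ∨ x = 0 ∨ x = 1) : Real.sign x = x := by
  rcases h with h | h | h <;> subst h
  · exact Real.sign_of_neg (by norm_num)
  · exact Real.sign_zero
  · exact Real.sign_of_pos (by norm_num)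

end Spectral


section MainConstruction

lemma not_hurwitz_of_cert (hsgn : ∀ i j, S i j = -1 ∨ S i j = 0 ∨ S i j = 1)
    (hMz : ∀ i j, i ≠ j → 0 ≤ S i j) (hc : Cert S) :
    ∃ M : Matrix (Fin d) (Fin d) ℝ,
      (∀ i j, Real.sign (M i j) = S i j) ∧ ¬ IsHurwitz M := by
  classical
  obtain ⟨T, lam, hlam, hTne, hB, hC⟩ := hc
  have hlam0 : 0 ≤ lam := by rcases hlam with h | h <;> rw [h] <;> norm_num
  set dv : Fin d → ℝ := fun i =>
    if i ∈ T then (if 1 ≤ rs S T i then (if S i i = 1 then 1/2 else S i i) else lam) else S i i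
    with hdv
  set cc : Fin d → ℝ := fun i =>
    if i ∈ T ∧ 1 ≤ rs S T i then (lam - dv i) / rs S T i else 1 with hcc
  set M : Matrix (Fin d) (Fin d) ℝ :=
    Matrix.of (fun i k => if i = k then dv i else cc i * S i k) with hM
  set z : Fin d → ℝ := fun k => if k ∈ T then 1 else 0 with hz
  have hccpos : ∀ i, 0 < cc i := by
    intro i
    have hcci : cc i = if i ∈ T ∧ 1 ≤ rs S T i then (lam - dv i) / rs S T i else 1 := rfl
    rw [hcci]
    split_ifs with h
    · obtain ⟨hiT, hr⟩ := h
      have hrpos : 0 < rs S T i := by linarith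
      apply div_pos _ hrpos
      rcases hC i hiT with ⟨h1, _⟩ | ⟨h1, hr0, _⟩ | ⟨h1, _, hl⟩ | ⟨h1, hl⟩
      · rw [hdv]; simp only [if_pos hiT, if_pos hr, h1]; norm_num; linarith
      · linarith
      · rw [hdv]; simp only [if_pos hiT, if_pos hr, h1]; norm_num [hl]
      · rw [hdv]; simp only [if_pos hiT, if_pos hr, h1]; norm_num [hl]
    · norm_num
  have hsign : ∀ i k, Real.sign (M i k) = S i k := by
    intro i k
    by_cases hik : i = k
    · subst hik
      rw [hM]
      simp only [Matrix.of_apply, if_pos rfl]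
      rw [hdv]
      by_cases hiT : i ∈ T
      · by_cases hr : 1 ≤ rs S T i
        · by_cases h1 : S i i = 1
          · simp only [if_pos hiT, if_pos hr, if_pos h1, h1]
            exact Real.sign_of_pos (by norm_num)
          · simp only [if_pos hiT, if_pos hr, if_neg h1]
            exact sign_self (hsgn i i)
        · simp only [if_pos hiT, if_neg hr]
          rcases hC i hiT with ⟨_, hr1⟩ | ⟨h1, _, hl⟩ | ⟨_, hr1, _⟩ | ⟨h1, hl⟩
          · exact absurd hr1 hr
          · rw [hl, h1]; exact Real.sign_zero
          · exact absurd hr1 hr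
          · rw [hl, h1]; exact Real.sign_of_pos (by norm_num)
      · simp only [if_neg hiT]
        exact sign_self (hsgn i i)
    · rw [hM]
      simp only [Matrix.of_apply, if_neg hik]
      rcases offdiag01 hsgn hMz hik with h0 | h1
      · rw [h0, mul_zero]; exact Real.sign_zero
      · rw [h1, mul_one]
        exact Real.sign_of_pos (hccpos i)
  have hzne : z ≠ 0 := by
    obtain ⟨t, ht⟩ := hTne
    intro h
    have := congrFun h t
    rw [hz] at this
    simp [ht] at this
  have hsum_indicator : ∀ i, (M *ᵥ z) i = ∑ k ∈ T, M i k := by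
    intro i
    rw [Matrix.mulVec, dotProduct]
    rw [hz]
    simp only [mul_ite, mul_one, mul_zero]
    rw [Finset.sum_ite_mem, Finset.univ_inter]
  have heig : M *ᵥ z = lam • z := by
    funext i
    rw [hsum_indicator]
    by_cases hiT : i ∈ T
    · rw [← Finset.add_sum_erase _ _ hiT]
      have hdiag : M i i = dv i := by rw [hM]; simp
      have hoff : ∑ k ∈ T.erase i, M i k = cc i * rs S T i := by
        rw [rs, Finset.mul_sum]
        apply Finset.sum_congr rfl
        intro k hk
        have hki : i ≠ k := fun h => (Finset.mem_erase.1 hk).1 h.symm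
        rw [hM]; simp [if_neg hki]
      rw [hdiag, hoff]
      have hres : dv i + cc i * rs S T i = lam := by
        by_cases hr : 1 ≤ rs S T i
        · rw [hcc]
          simp only [if_pos (And.intro hiT hr)]
          rw [div_mul_cancel₀ _ (by linarith : rs S T i ≠ 0)]
          ring
        · have hr0 : rs S T i = 0 := (rs_cases hsgn hMz T i).resolve_right hr
          rw [hr0, mul_zero, add_zero, hdv]
          simp only [if_pos hiT, if_neg hr]
      rw [hres]
      rw [hz]
      simp [if_pos hiT]
    · have : ∀ k ∈ T, M i k = 0 := by
        intro k hk
        have hki : i ≠ k := fun h => hiT (h ▸ hk)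
        rw [hM]
        simp [if_neg hki, hB i hiT k hk]
      rw [Finset.sum_eq_zero this, hz]
      simp [if_neg hiT]
  have hker : (lam • (1 : Matrix (Fin d) (Fin d) ℝ) - M) *ᵥ z = 0 := by
    rw [Matrix.sub_mulVec, Matrix.smul_mulVec, Matrix.one_mulVec, heig, sub_self]
  have hdet : (lam • (1 : Matrix (Fin d) (Fin d) ℝ) - M).det = 0 :=
    Matrix.exists_mulVec_eq_zero_iff.1 ⟨z, hzne, hker⟩
  refine ⟨M, hsign, ?_⟩
  intro hH
  have hroot : (M.map (Complex.ofReal)).charpoly.IsRoot (lam : ℂ) := by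
    rw [Polynomial.IsRoot, eval_charpoly_mat]
    have hmap : (lam : ℂ) • (1 : Matrix (Fin d) (Fin d) ℂ) - M.map Complex.ofReal
        = (lam • (1 : Matrix (Fin d) (Fin d) ℝ) - M).map Complex.ofReal := by
      ext i k
      by_cases h : i = k <;>
        simp [h, Matrix.map_apply, Matrix.one_apply, Matrix.sub_apply, Matrix.smul_apply]
    rw [hmap, show ((lam • (1 : Matrix (Fin d) (Fin d) ℝ) - M).map Complex.ofReal)
        = Complex.ofRealHom.mapMatrix (lam • (1 : Matrix (Fin d) (Fin d) ℝ) - M) from rfl,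
      ← RingHom.map_det, hdet, map_zero]
  have := hH (lam : ℂ) hroot
  rw [Complex.ofReal_re] at this
  linarith


lemma neg_of_sign_eq_neg_one {x : ℝ} (h : Real.sign x = -1) : x < 0 := by
  rcases lt_trichotomy x 0 with h1 | h1 | h1
  · exact h1
  · rw [h1, Real.sign_zero] at h; norm_num at h
  · rw [Real.sign_of_pos h1] at h; norm_num at h

lemma pos_of_sign_eq_one {x : ℝ} (h : Real.sign x = 1) : 0 < x := by
  rcases lt_trichotomy x 0 with h1 | h1 | h1
  · rw [Real.sign_of_neg h1] at h; norm_num at h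
  · rw [h1, Real.sign_zero] at h; norm_num at h
  · exact h1

lemma zero_of_sign_eq_zero {x : ℝ} (h : Real.sign x = 0) : x = 0 := by
  rcases lt_trichotomy x 0 with h1 | h1 | h1
  · rw [Real.sign_of_neg h1] at h; norm_num at h
  · exact h1
  · rw [Real.sign_of_pos h1] at h; norm_num at h

section Gershgorin

lemma hurwitz_of_good (hsgn : ∀ i j, S i j = -1 ∨ S i j = 0 ∨ S i j = 1)
    (hMz : ∀ i j, i ≠ j → 0 ≤ S i j)
    (hgood : ∃ v : Fin d → ℝ, (∀ i, 0 < v i) ∧ ∀ j, (v ᵥ* S) j < 0)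
    (M : Matrix (Fin d) (Fin d) ℝ) (hsign : ∀ i j, Real.sign (M i j) = S i j) :
    IsHurwitz M := by
  classical
  obtain ⟨v, hvpos, hvS⟩ := hgood
  have hdiagS : ∀ j, S j j = -1 := by
    intro j
    by_contra hne
    have h := hvS j
    rw [vecMul_apply'] at h
    have hnn : 0 ≤ ∑ i, v i * S i j := by
      apply Finset.sum_nonneg
      intro i _
      apply mul_nonneg (le_of_lt (hvpos i))
      by_cases hij : i = j
      · subst hij
        rcases hsgn i i with h1 | h1 | h1
        · exact absurd h1 hne
        · rw [h1]
        · rw [h1]; norm_num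
      · exact hMz i j hij
    linarith
  have hedge : ∀ i j, i ≠ j → S i j = 1 → v i < v j := by
    intro i j hij h1
    have h := hvS j
    rw [vecMul_apply', ← Finset.add_sum_erase _ _ (Finset.mem_univ j), hdiagS j] at h
    have hle : v i ≤ ∑ k ∈ Finset.univ.erase j, v k * S k j := by
      have h2 := Finset.single_le_sum (f := fun k => v k * S k j)
        (fun k hk => mul_nonneg (le_of_lt (hvpos k)) (hMz k j (Finset.mem_erase.1 hk).1))
        (Finset.mem_erase.2 ⟨hij, Finset.mem_univ i⟩)
      simp only [h1, mul_one] at h2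
      exact h2
    nlinarith [hvpos j]
  have hMd : ∀ j, M j j < 0 := fun j => neg_of_sign_eq_neg_one ((hsign j j).trans (hdiagS j))
  have hMoff : ∀ i j, i ≠ j → 0 ≤ M i j := by
    intro i j hij
    rcases offdiag01 hsgn hMz hij with h0 | h1
    · rw [zero_of_sign_eq_zero ((hsign i j).trans h0)]
    · exact le_of_lt (pos_of_sign_eq_one ((hsign i j).trans h1))
  set ρ : Fin d → ℕ := fun i => (Finset.univ.filter (fun k => v k < v i)).card with hρ
  have hrank : ∀ i j, i ≠ j → 0 < M i j → ρ i < ρ j := by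
    intro i j hij hpos
    have h1 : S i j = 1 := by
      rcases offdiag01 hsgn hMz hij with h0 | h1
      · rw [zero_of_sign_eq_zero ((hsign i j).trans h0)] at hpos; linarith
      · exact h1
    have hvij := hedge i j hij h1
    apply Finset.card_lt_card
    constructor
    · intro k hk
      rw [Finset.mem_filter] at hk ⊢
      exact ⟨hk.1, lt_trans hk.2 hvij⟩
    · intro hsub
      have : i ∈ Finset.univ.filter (fun k => v k < v i) :=
        hsub (Finset.mem_filter.2 ⟨Finset.mem_univ i, hvij⟩)
      rw [Finset.mem_filter] at this
      exact lt_irrefl _ this.2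
  set t : ℝ := 1 + ∑ j, ((∑ i ∈ Finset.univ.erase j, M i j) / (-M j j)) with ht
  have hterm : ∀ j, 0 ≤ (∑ i ∈ Finset.univ.erase j, M i j) / (-M j j) := by
    intro j
    apply div_nonneg
    · exact Finset.sum_nonneg (fun i hi => hMoff i j (Finset.mem_erase.1 hi).1)
    · linarith [hMd j]
  have ht1 : (1:ℝ) ≤ t := by
    rw [ht]
    have : 0 ≤ ∑ j, ((∑ i ∈ Finset.univ.erase j, M i j) / (-M j j)) :=
      Finset.sum_nonneg (fun j _ => hterm j)
    linarith
  have htpos : (0:ℝ) < t := by linarith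
  have hAj : ∀ j, ∑ i ∈ Finset.univ.erase j, M i j < t * (-M j j) := by
    intro j
    have h1 : (∑ i ∈ Finset.univ.erase j, M i j) / (-M j j) ≤ t - 1 := by
      rw [ht, add_sub_cancel_left]
      exact Finset.single_le_sum (fun k _ => hterm k) (Finset.mem_univ j)
    have h2 : (∑ i ∈ Finset.univ.erase j, M i j) / (-M j j) < t := by linarith
    rwa [div_lt_iff₀ (by linarith [hMd j] : (0:ℝ) < -M j j)] at h2
  set w : Fin d → ℝ := fun i => t ^ ρ i with hw
  have hwpos : ∀ i, 0 < w i := fun i => pow_pos htpos _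
  have hkey : ∀ j, ∑ i ∈ Finset.univ.erase j, M i j * w i < w j * (-M j j) := by
    intro j
    have hterm2 : ∀ i ∈ Finset.univ.erase j, M i j * w i * t ≤ M i j * w j := by
      intro i hi
      have hij : i ≠ j := (Finset.mem_erase.1 hi).1
      rcases eq_or_lt_of_le (hMoff i j hij) with h0 | hpos
      · rw [← h0]; ring_nf; rfl
      · have hr := hrank i j hij hpos
        have : w i * t ≤ w j := by
          rw [hw]
          calc t ^ ρ i * t = t ^ (ρ i + 1) := by rw [pow_succ]
            _ ≤ t ^ ρ j := pow_le_pow_right₀ ht1 (by omega)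
        calc M i j * w i * t = M i j * (w i * t) := by ring
          _ ≤ M i j * w j := mul_le_mul_of_nonneg_left this (le_of_lt hpos)
    have h2 : (∑ i ∈ Finset.univ.erase j, M i j * w i) * t < (w j * (-M j j)) * t := by
      calc (∑ i ∈ Finset.univ.erase j, M i j * w i) * t
          = ∑ i ∈ Finset.univ.erase j, M i j * w i * t := by rw [Finset.sum_mul]
        _ ≤ ∑ i ∈ Finset.univ.erase j, M i j * w j := Finset.sum_le_sum hterm2
        _ = (∑ i ∈ Finset.univ.erase j, M i j) * w j := by rw [Finset.sum_mul]
        _ < (t * (-M j j)) * w j := mul_lt_mul_of_pos_right (hAj j) (hwpos j)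
        _ = (w j * (-M j j)) * t := by ring
    exact lt_of_mul_lt_mul_right h2 (le_of_lt htpos)
  -- now the spectral part
  intro zc hroot
  set A : Matrix (Fin d) (Fin d) ℂ := M.map Complex.ofReal with hA
  have hdet : (zc • (1 : Matrix (Fin d) (Fin d) ℂ) - A).det = 0 := by
    rw [← eval_charpoly_mat]
    exact hroot
  have hdetT : ((zc • (1 : Matrix (Fin d) (Fin d) ℂ) - A).transpose).det = 0 := by
    rw [Matrix.det_transpose]; exact hdet
  obtain ⟨x, hxne, hxker⟩ := Matrix.exists_mulVec_eq_zero_iff.2 hdetT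
  have heig : ∀ k, ∑ i, (M i k : ℂ) * x i = zc * x k := by
    intro k
    have h := congrFun hxker k
    rw [Matrix.mulVec, dotProduct] at h
    simp only [Matrix.transpose_apply, Matrix.sub_apply, Matrix.smul_apply, Matrix.one_apply,
      sub_mul, smul_eq_mul, mul_ite, mul_one, mul_zero, ite_mul, zero_mul,
      Finset.sum_sub_distrib, Finset.sum_ite_eq, Finset.sum_ite_eq', Finset.mem_univ, if_true, hA,
      Matrix.map_apply, Pi.zero_apply] at h
    linear_combination -h
  obtain ⟨i0, hx0⟩ := Function.ne_iff.1 hxne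
  set u : Fin d → ℝ := fun i => ‖x i‖ / w i with hu
  obtain ⟨j, -, hjmax⟩ := Finset.exists_max_image Finset.univ u ⟨i0, Finset.mem_univ i0⟩
  have hx0' : x i0 ≠ 0 := hx0
  have huj : 0 < u j := by
    have h0 : 0 < u i0 := div_pos (norm_pos_iff.mpr hx0') (hwpos i0)
    exact lt_of_lt_of_le h0 (hjmax i0 (Finset.mem_univ i0))
  have hxw : ∀ i, ‖x i‖ ≤ u j * w i := by
    intro i
    have : ‖x i‖ = u i * w i := by
      rw [hu]; exact (div_mul_cancel₀ _ (hwpos i).ne').symm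
    rw [this]
    exact mul_le_mul_of_nonneg_right (hjmax i (Finset.mem_univ i)) (le_of_lt (hwpos i))
  have hxj : ‖x j‖ = u j * w j := by rw [hu]; exact (div_mul_cancel₀ _ (hwpos j).ne').symm
  have hsplit : (zc - (M j j : ℂ)) * x j = ∑ i ∈ Finset.univ.erase j, (M i j : ℂ) * x i := by
    have h := heig j
    rw [← Finset.add_sum_erase _ _ (Finset.mem_univ j)] at h
    linear_combination -h
  have habs : ‖zc - (M j j : ℂ)‖ * (u j * w j)
      ≤ ∑ i ∈ Finset.univ.erase j, M i j * (u j * w i) := by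
    rw [← hxj, ← norm_mul, hsplit]
    calc ‖∑ i ∈ Finset.univ.erase j, (M i j : ℂ) * x i‖
        ≤ ∑ i ∈ Finset.univ.erase j, ‖(M i j : ℂ) * x i‖ :=
          norm_sum_le _ _
      _ ≤ ∑ i ∈ Finset.univ.erase j, M i j * (u j * w i) := by
          apply Finset.sum_le_sum
          intro i hi
          rw [norm_mul, Complex.norm_real, Real.norm_eq_abs,
            abs_of_nonneg (hMoff i j (Finset.mem_erase.1 hi).1)]
          exact mul_le_mul_of_nonneg_left (hxw i) (hMoff i j (Finset.mem_erase.1 hi).1)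
  have hsum2 : ∑ i ∈ Finset.univ.erase j, M i j * (u j * w i)
      < u j * (w j * (-M j j)) := by
    calc ∑ i ∈ Finset.univ.erase j, M i j * (u j * w i)
        = u j * ∑ i ∈ Finset.univ.erase j, M i j * w i := by
          rw [Finset.mul_sum]; apply Finset.sum_congr rfl; intro i _; ring
      _ < u j * (w j * (-M j j)) := by
          exact mul_lt_mul_of_pos_left (hkey j) huj
  have hfin : ‖zc - (M j j : ℂ)‖ < -M j j := by
    have h3 : ‖zc - (M j j : ℂ)‖ * (u j * w j) < (-M j j) * (u j * w j) := by
      calc ‖zc - (M j j : ℂ)‖ * (u j * w j)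
          ≤ ∑ i ∈ Finset.univ.erase j, M i j * (u j * w i) := habs
        _ < u j * (w j * (-M j j)) := hsum2
        _ = (-M j j) * (u j * w j) := by ring
    exact lt_of_mul_lt_mul_right h3 (le_of_lt (mul_pos huj (hwpos j)))
  have hre : (zc - (M j j : ℂ)).re ≤ ‖zc - (M j j : ℂ)‖ := Complex.re_le_norm _
  have : (zc - (M j j : ℂ)).re = zc.re - M j j := by simp
  linarith [hMd j]

end Gershgorin

end MainConstruction

section Farkas

lemma farkas_of_cert (hsgn : ∀ i j, S i j = -1 ∨ S i j = 0 ∨ S i j = 1)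
    (hMz : ∀ i j, i ≠ j → 0 ≤ S i j) (hc : Cert S) :
    ∃ v2 v3 : Fin d → ℝ, (∀ i, 0 ≤ v2 i) ∧ (∀ i, 0 ≤ v3 i) ∧
      (∑ i, (v2 i + v3 i)) = 1 ∧ v2 - S *ᵥ v3 = 0 := by
  classical
  obtain ⟨T, lam, _, hTne, hB, hC⟩ := hc
  set x : Fin d → ℝ := fun k => if k ∈ T then 1 else 0 with hx
  have hxnn : ∀ k, 0 ≤ x k := by
    intro k; rw [hx]; dsimp only; split_ifs <;> norm_num
  have hrs_nonneg : ∀ i, 0 ≤ rs S T i := by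
    intro i
    rcases rs_cases hsgn hMz T i with h | h <;> linarith
  have hSx_eq : ∀ i, (S *ᵥ x) i = ∑ k ∈ T, S i k := by
    intro i
    rw [Matrix.mulVec, dotProduct, hx]
    simp only [mul_ite, mul_one, mul_zero]
    rw [Finset.sum_ite_mem, Finset.univ_inter]
  have hSxnn : ∀ i, 0 ≤ (S *ᵥ x) i := by
    intro i
    rw [hSx_eq]
    by_cases hiT : i ∈ T
    · rw [← Finset.add_sum_erase _ _ hiT, ← rs]
      rcases hC i hiT with ⟨h1, hr⟩ | ⟨h1, hr, _⟩ | ⟨h1, hr, _⟩ | ⟨h1, _⟩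
      · rw [h1]; linarith
      · rw [h1, hr]; norm_num
      · rw [h1]; linarith
      · rw [h1]; linarith [hrs_nonneg i]
    · rw [Finset.sum_eq_zero (fun k hk => hB i hiT k hk)]
  set c : ℝ := ∑ i, ((S *ᵥ x) i + x i) with hcdef
  have hc1 : 1 ≤ c := by
    obtain ⟨t0, ht0⟩ := hTne
    have h1 : (1:ℝ) ≤ ∑ i, x i := by
      have := Finset.single_le_sum (f := fun i => x i) (fun i _ => hxnn i) (Finset.mem_univ t0)
      rw [hx] at this
      simp only [if_pos ht0] at this
      exact this
    have h2 : ∑ i, x i ≤ c := by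
      rw [hcdef]
      apply Finset.sum_le_sum
      intro i _
      linarith [hSxnn i]
    linarith
  have hcpos : 0 < c := by linarith
  refine ⟨fun i => (S *ᵥ x) i / c, fun i => x i / c, fun i => div_nonneg (hSxnn i) (le_of_lt hcpos),
    fun i => div_nonneg (hxnn i) (le_of_lt hcpos), ?_, ?_⟩
  · show ∑ i, ((S *ᵥ x) i / c + x i / c) = 1
    rw [show ∑ i, ((S *ᵥ x) i / c + x i / c) = (∑ i, ((S *ᵥ x) i + x i)) / c from by
      rw [Finset.sum_div]; exact Finset.sum_congr rfl fun i _ => by ring]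
    rw [← hcdef, div_self (ne_of_gt hcpos)]
  · have hv3 : (fun i => x i / c) = c⁻¹ • x := by
      funext i; simp [div_eq_inv_mul, smul_eq_mul]
    rw [hv3, Matrix.mulVec_smul]
    funext i
    simp [div_eq_inv_mul, smul_eq_mul]

lemma not_good_of_farkas
    (hfk : ∃ v2 v3 : Fin d → ℝ, (∀ i, 0 ≤ v2 i) ∧ (∀ i, 0 ≤ v3 i) ∧
      (∑ i, (v2 i + v3 i)) = 1 ∧ v2 - S *ᵥ v3 = 0) :
    ¬ ∃ v : Fin d → ℝ, (∀ i, 0 < v i) ∧ ∀ j, (v ᵥ* S) j < 0 := by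
  rintro ⟨v, hvpos, hvS⟩
  obtain ⟨v2, v3, h2, h3, hsum, heq⟩ := hfk
  have hv2 : v2 = S *ᵥ v3 := by
    funext i
    have := congrFun heq i
    simp only [Pi.sub_apply, Pi.zero_apply, sub_eq_zero] at this
    exact this
  have hA : v ⬝ᵥ v2 = (v ᵥ* S) ⬝ᵥ v3 := by
    rw [hv2, Matrix.dotProduct_mulVec]
  have hApos : 0 ≤ v ⬝ᵥ v2 :=
    Finset.sum_nonneg (fun i _ => mul_nonneg (le_of_lt (hvpos i)) (h2 i))
  have hAneg : ∀ k ∈ Finset.univ, (v ᵥ* S) k * v3 k ≤ 0 :=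
    fun k _ => mul_nonpos_of_nonpos_of_nonneg (le_of_lt (hvS k)) (h3 k)
  have hAzero : v ⬝ᵥ v2 = 0 := by
    have hle : (v ᵥ* S) ⬝ᵥ v3 ≤ 0 := Finset.sum_nonpos hAneg
    rw [hA] at hApos ⊢
    linarith
  have hterm0 : ∀ k ∈ Finset.univ, (v ᵥ* S) k * v3 k = 0 := by
    rw [hA] at hAzero
    exact (Finset.sum_eq_zero_iff_of_nonpos hAneg).1 hAzero
  have hv30 : ∀ k, v3 k = 0 := by
    intro k
    have := hterm0 k (Finset.mem_univ k)
    rcases mul_eq_zero.1 this with h | h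
    · exact absurd h (ne_of_lt (hvS k))
    · exact h
  have hv20 : ∀ k, v2 k = 0 := by
    intro k
    rw [hv2]
    have : v3 = 0 := funext hv30
    rw [this, Matrix.mulVec_zero]
    rfl
  rw [Finset.sum_eq_zero (fun i _ => by rw [hv20 i, hv30 i, add_zero])] at hsum
  norm_num at hsum

end Farkas

end SIFAux

end SIFAuxSection

theorem sign_instability_farkas (S : Matrix (Fin d) (Fin d) ℝ)
    (hsgn : ∀ i j, S i j = -1 ∨ S i j = 0 ∨ S i j = 1)
    (hMz : ∀ i j, i ≠ j → 0 ≤ S i j) :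
    ((∃ M : Matrix (Fin d) (Fin d) ℝ,
        (∀ i j, Real.sign (M i j) = S i j) ∧ ¬ IsHurwitz M)
      ↔ ¬ ∃ v : Fin d → ℝ, (∀ i, 0 < v i) ∧ ∀ j, (v ᵥ* S) j < 0)
    ∧ ((¬ ∃ v : Fin d → ℝ, (∀ i, 0 < v i) ∧ ∀ j, (v ᵥ* S) j < 0)
      ↔ ∃ v2 v3 : Fin d → ℝ, (∀ i, 0 ≤ v2 i) ∧ (∀ i, 0 ≤ v3 i) ∧
          (∑ i, (v2 i + v3 i)) = 1 ∧ v2 - S *ᵥ v3 = 0) := by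
  refine ⟨⟨?_, ?_⟩, ?_, ?_⟩
  · rintro ⟨M, hM, hnH⟩ hgood
    exact hnH (SIFAux.hurwitz_of_good hsgn hMz hgood M hM)
  · intro hng
    exact SIFAux.not_hurwitz_of_cert hsgn hMz (SIFAux.cert_of_not_good hsgn hMz hng)
  · intro hng
    exact SIFAux.farkas_of_cert hsgn hMz (SIFAux.cert_of_not_good hsgn hMz hng)
  · exact SIFAux.not_good_of_farkas
end
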